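/- arXiv:2208.11639 — 10 statements merged into one kernel-verified Lean document; each statement's English description precedes it below -/
import Mathlib

section
/- Let 𝒮 and 𝒜 be finite nonempty sets with |𝒮| = S and |𝒜| = A, and let λ > 0. For Q : 𝒮 × 𝒜 → ℝ define the softmax policy by softmax_λ(s,Q)_a := exp(λ Q(s,a)) / Σ_{a'∈𝒜} exp(λ Q(s,a')). Then for all Q, Q' : 𝒮 × 𝒜 → ℝ one has max_{a∈𝒜} Σ_{s∈𝒮} |softmax_λ(s,Q)_a − softmax_λ(s,Q')_a| ≤ λ · S · √A · max_{(s,a)∈𝒮×𝒜} |Q(s,a) − Q'(s,a)|. -/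
open Finset Real

/-- The softmax policy: `softmax_λ(s,Q)_a = exp(λ Q(s,a)) / Σ_{a'} exp(λ Q(s,a'))`. -/
noncomputable def softmaxQ {S A : Type*} [Fintype A] (lam : ℝ) (Q : S × A → ℝ)
    (s : S) (a : A) : ℝ :=
  Real.exp (lam * Q (s, a)) / ∑ a' : A, Real.exp (lam * Q (s, a'))

lemma softmax_coord_sub_le {A : Type*} [Fintype A] (x y : A → ℝ) (ε : ℝ) (hε : 0 ≤ ε)
    (h : ∀ b, |x b - y b| ≤ ε) (a : A) :
    Real.exp (x a) / ∑ b, Real.exp (x b) - Real.exp (y a) / ∑ b, Real.exp (y b) ≤ ε := by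
  classical
  set S : ℝ := ∑ b ∈ Finset.univ.erase a, Real.exp (x b - x a) with hSdef
  set T : ℝ := ∑ b ∈ Finset.univ.erase a, Real.exp (y b - y a) with hTdef
  have hS : 0 ≤ S := Finset.sum_nonneg fun b _ => (Real.exp_pos _).le
  have hT : 0 ≤ T := Finset.sum_nonneg fun b _ => (Real.exp_pos _).le
  have hx : (∑ b, Real.exp (x b)) = Real.exp (x a) * (1 + S) := by
    rw [← Finset.add_sum_erase _ _ (Finset.mem_univ a), mul_add, mul_one, Finset.mul_sum]
    congr 1
    refine Finset.sum_congr rfl fun b _ => ?_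
    rw [← Real.exp_add]; ring_nf
  have hy : (∑ b, Real.exp (y b)) = Real.exp (y a) * (1 + T) := by
    rw [← Finset.add_sum_erase _ _ (Finset.mem_univ a), mul_add, mul_one, Finset.mul_sum]
    congr 1
    refine Finset.sum_congr rfl fun b _ => ?_
    rw [← Real.exp_add]; ring_nf
  set r : ℝ := Real.exp ε with hrdef
  have hr1 : 1 ≤ r := by
    rw [hrdef]; calc (1:ℝ) = Real.exp 0 := (Real.exp_zero).symm
    _ ≤ Real.exp ε := Real.exp_le_exp.mpr hε
  have hTS : T ≤ r ^ 2 * S := by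
    rw [hSdef, hTdef, Finset.mul_sum]
    refine Finset.sum_le_sum fun b _ => ?_
    have h1 := abs_le.mp (h b)
    have h2 := abs_le.mp (h a)
    rw [hrdef, ← Real.exp_nat_mul]
    rw [← Real.exp_add]
    exact Real.exp_le_exp.mpr (by push_cast; linarith [h1.2, h2.1])
  have hpx : Real.exp (x a) / (∑ b, Real.exp (x b)) = 1 / (1 + S) := by
    rw [hx, div_mul_eq_div_div, div_self (Real.exp_ne_zero _)]
  have hpy : Real.exp (y a) / (∑ b, Real.exp (y b)) = 1 / (1 + T) := by
    rw [hy, div_mul_eq_div_div, div_self (Real.exp_ne_zero _)]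
  rw [hpx, hpy]
  have hS1 : (0:ℝ) < 1 + S := by linarith
  have hT1 : (0:ℝ) < 1 + T := by linarith
  have hrS1 : (0:ℝ) < 1 + r ^ 2 * S := by nlinarith
  have step1 : 1 / (1 + r ^ 2 * S) ≤ 1 / (1 + T) :=
    one_div_le_one_div_of_le hT1 (by linarith)
  have step2 : 1 / (1 + S) - 1 / (1 + r ^ 2 * S) ≤ (r - 1) / (r + 1) := by
    rw [div_sub_div _ _ hS1.ne' hrS1.ne', div_le_div_iff₀ (by positivity) (by positivity)]
    nlinarith [sq_nonneg (1 - r * S), mul_nonneg hS (sub_nonneg.mpr hr1),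
      sq_nonneg (r * S - 1), mul_nonneg (mul_nonneg hS hS) (sub_nonneg.mpr hr1)]
  have step3 : (r - 1) / (r + 1) ≤ ε := by
    rw [div_le_iff₀ (by linarith)]
    have : 1 - ε ≤ Real.exp (-ε) := by
      have := Real.add_one_le_exp (-ε); linarith
    have hre : Real.exp (-ε) * r = 1 := by
      rw [hrdef, ← Real.exp_add]; simp
    nlinarith [Real.exp_pos ε]
  linarith

lemma softmax_coord_abs_le {A : Type*} [Fintype A] (x y : A → ℝ) (ε : ℝ) (hε : 0 ≤ ε)
    (h : ∀ b, |x b - y b| ≤ ε) (a : A) :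
    |Real.exp (x a) / ∑ b, Real.exp (x b) - Real.exp (y a) / ∑ b, Real.exp (y b)| ≤ ε := by
  rw [abs_le]
  constructor
  · have := softmax_coord_sub_le y x ε hε (fun b => by rw [abs_sub_comm]; exact h b) a
    linarith
  · exact softmax_coord_sub_le x y ε hε h a

/-- the softmax policy is Lipschitz from the sup norm on `ℝ^{𝒮×𝒜}`
to the TV-type norm `max_a Σ_s |·|`, with constant `λ S √A`. -/
theorem softmax_tv_lipschitz {S A : Type*} [Fintype S] [Fintype A] [Nonempty S] [Nonempty A]
    (lam : ℝ) (hlam : 0 < lam) (Q Q' : S × A → ℝ) :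
    Finset.univ.sup' Finset.univ_nonempty
        (fun a : A => ∑ s : S, |softmaxQ lam Q s a - softmaxQ lam Q' s a|)
      ≤ lam * (Fintype.card S : ℝ) * Real.sqrt (Fintype.card A)
          * Finset.univ.sup' Finset.univ_nonempty (fun p : S × A => |Q p - Q' p|) := by
  set M : ℝ := Finset.univ.sup' Finset.univ_nonempty (fun p : S × A => |Q p - Q' p|) with hMdef
  have hM : 0 ≤ M := by
    obtain ⟨p⟩ := (inferInstance : Nonempty (S × A))
    exact le_trans (abs_nonneg (Q p - Q' p)) (Finset.le_sup' (fun p : S × A => |Q p - Q' p|) (Finset.mem_univ p))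
  have key : ∀ (s : S) (a : A), |softmaxQ lam Q s a - softmaxQ lam Q' s a| ≤ lam * M := by
    intro s a
    have := softmax_coord_abs_le (fun b => lam * Q (s, b)) (fun b => lam * Q' (s, b))
      (lam * M) (by positivity) ?_ a
    · simpa [softmaxQ] using this
    · intro b
      rw [← mul_sub, abs_mul, abs_of_pos hlam]
      exact mul_le_mul_of_nonneg_left (Finset.le_sup' (fun p : S × A => |Q p - Q' p|) (Finset.mem_univ (s, b))) hlam.le
  refine Finset.sup'_le _ _ fun a _ => ?_
  calc (∑ s : S, |softmaxQ lam Q s a - softmaxQ lam Q' s a|)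
      ≤ ∑ _s : S, lam * M := Finset.sum_le_sum fun s _ => key s a
    _ = (Fintype.card S : ℝ) * (lam * M) := by
        rw [Finset.sum_const, nsmul_eq_mul]; rfl
    _ ≤ lam * (Fintype.card S : ℝ) * Real.sqrt (Fintype.card A) * M := by
        have hA : (1:ℝ) ≤ Real.sqrt (Fintype.card A) := by
          rw [show (1:ℝ) = Real.sqrt 1 by simp]
          exact Real.sqrt_le_sqrt (by exact_mod_cast Fintype.card_pos)
        nlinarith [mul_le_mul_of_nonneg_left hA (mul_nonneg (mul_nonneg hlam.le (Nat.cast_nonneg (Fintype.card S))) hM)]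
end

section
/- Let 𝒜 be a finite nonempty set with |𝒜| = A and let λ > 0. For q ∈ ℝ^𝒜 define softmax_λ(q)_a := exp(λ q_a) / Σ_{a'∈𝒜} exp(λ q_{a'}). Then for all q, q' ∈ ℝ^𝒜, (Σ_{a∈𝒜} (softmax_λ(q)_a − softmax_λ(q')_a)²)^{1/2} ≤ λ √A · max_{a∈𝒜} |q_a − q'_a|. -/
open Finset Real

/-- The softmax vector: `softmax_λ(q)_a = exp(λ q_a) / Σ_{a'} exp(λ q_{a'})`. -/
noncomputable def softmaxV {A : Type*} [Fintype A] (lam : ℝ) (q : A → ℝ) (a : A) : ℝ :=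
  Real.exp (lam * q a) / ∑ a' : A, Real.exp (lam * q a')

/-- Auxiliary: `2(e^s - 1) ≤ s(e^s + 1)` for `s ≥ 0` (equivalent to `tanh(s/2) ≤ s/2`). -/
lemma two_mul_exp_sub_one_le (s : ℝ) (hs : 0 ≤ s) :
    2 * (Real.exp s - 1) ≤ s * (Real.exp s + 1) := by
  set f : ℝ → ℝ := fun x => x * (Real.exp x + 1) - 2 * (Real.exp x - 1) with hf
  have hder : ∀ x : ℝ, HasDerivAt f (1 * (Real.exp x + 1) + x * Real.exp x - 2 * Real.exp x) x := by
    intro x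
    have h1 : HasDerivAt (fun x : ℝ => x * (Real.exp x + 1))
        (1 * (Real.exp x + 1) + x * Real.exp x) x :=
      (hasDerivAt_id x).mul ((Real.hasDerivAt_exp x).add_const 1)
    have h2 : HasDerivAt (fun x : ℝ => 2 * (Real.exp x - 1)) (2 * Real.exp x) x := by
      simpa using ((Real.hasDerivAt_exp x).sub_const 1).const_mul 2
    exact h1.sub h2
  have hdiff : Differentiable ℝ f := fun x => (hder x).differentiableAt
  have hd0 : ∀ x : ℝ, 0 ≤ deriv f x := by
    intro x
    rw [(hder x).deriv]
    have h1 : (-x + 1) * Real.exp x ≤ Real.exp (-x) * Real.exp x :=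
      mul_le_mul_of_nonneg_right (Real.add_one_le_exp (-x)) (Real.exp_pos x).le
    rw [← Real.exp_add, neg_add_cancel, Real.exp_zero] at h1
    nlinarith [Real.exp_pos x]
  have hm : Monotone f := monotone_of_deriv_nonneg hdiff hd0
  have := hm hs
  simp [hf] at this
  nlinarith [this]

/-- Auxiliary: `|e^u - e^v| ≤ (|u - v|/2)(e^u + e^v)`, i.e. `tanh(|u-v|/2) ≤ |u-v|/2`. -/
lemma abs_exp_sub_exp_le (u v : ℝ) :
    |Real.exp u - Real.exp v| ≤ (|u - v| / 2) * (Real.exp u + Real.exp v) := by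
  have main : ∀ u v : ℝ, v ≤ u →
      Real.exp u - Real.exp v ≤ (|u - v| / 2) * (Real.exp u + Real.exp v) := by
    intro u v h
    have hs : 0 ≤ u - v := by linarith
    have key := two_mul_exp_sub_one_le (u - v) hs
    have heq : Real.exp v * Real.exp (u - v) = Real.exp u := by
      rw [← Real.exp_add]; ring_nf
    rw [abs_of_nonneg hs]
    nlinarith [Real.exp_pos v, mul_le_mul_of_nonneg_left key (Real.exp_pos v).le]
  rcases le_total v u with h | h
  · rw [abs_of_nonneg (sub_nonneg.mpr (Real.exp_le_exp.mpr h))]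
    exact main u v h
  · rw [abs_of_nonpos (sub_nonpos.mpr (Real.exp_le_exp.mpr h)), abs_sub_comm]
    have := main v u h
    linarith

/-- the softmax map is Lipschitz from the sup norm to the Euclidean norm
with constant `λ √A`. -/
theorem softmax_l2_lipschitz {A : Type*} [Fintype A] [Nonempty A]
    (lam : ℝ) (hlam : 0 < lam) (q q' : A → ℝ) :
    Real.sqrt (∑ a : A, (softmaxV lam q a - softmaxV lam q' a) ^ 2)
      ≤ lam * Real.sqrt (Fintype.card A)
          * Finset.univ.sup' Finset.univ_nonempty (fun a : A => |q a - q' a|) := by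
  classical
  set M := Finset.univ.sup' Finset.univ_nonempty (fun a : A => |q a - q' a|) with hMdef
  have hMa : ∀ a : A, |q a - q' a| ≤ M :=
    fun a => Finset.le_sup' (f := fun a : A => |q a - q' a|) (mem_univ a)
  have hM : 0 ≤ M := le_trans (abs_nonneg _) (hMa (Classical.arbitrary A))
  set t := lam * M with htdef
  have ht : 0 ≤ t := mul_nonneg hlam.le hM
  set E : A → ℝ := fun a => Real.exp (lam * q a) with hE
  set E' : A → ℝ := fun a => Real.exp (lam * q' a) with hE'
  set S : ℝ := ∑ a' : A, E a' with hSdef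
  set S' : ℝ := ∑ a' : A, E' a' with hS'def
  have hS : 0 < S := Finset.sum_pos (fun a _ => Real.exp_pos _) Finset.univ_nonempty
  have hS' : 0 < S' := Finset.sum_pos (fun a _ => Real.exp_pos _) Finset.univ_nonempty
  have hsm : ∀ a, softmaxV lam q a = E a / S := fun a => rfl
  have hsm' : ∀ a, softmaxV lam q' a = E' a / S' := fun a => rfl
  -- first key bound
  have key1 : ∀ a : A, |softmaxV lam q a - softmaxV lam q' a|
      ≤ t * (softmaxV lam q a + softmaxV lam q' a) := by
    intro a
    have hdiff : softmaxV lam q a - softmaxV lam q' a = (E a * S' - E' a * S) / (S * S') := by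
      rw [hsm, hsm']
      field_simp
    have hsum : softmaxV lam q a + softmaxV lam q' a = (E a * S' + E' a * S) / (S * S') := by
      rw [hsm, hsm']
      field_simp
    have hnum : |E a * S' - E' a * S| ≤ t * (E a * S' + E' a * S) := by
      have expand : E a * S' - E' a * S = ∑ b : A, (E a * E' b - E' a * E b) := by
        rw [hSdef, hS'def, Finset.mul_sum, Finset.mul_sum, ← Finset.sum_sub_distrib]
      have collect : ∑ b : A, t * (E a * E' b + E' a * E b) = t * (E a * S' + E' a * S) := by
        simp only [hSdef, hS'def, mul_add, Finset.mul_sum, Finset.sum_add_distrib]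
      rw [expand, ← collect]
      refine le_trans (Finset.abs_sum_le_sum_abs _ _) (Finset.sum_le_sum ?_)
      intro b _
      have h1 : E a * E' b = Real.exp (lam * q a + lam * q' b) := by
        rw [Real.exp_add]
      have h2 : E' a * E b = Real.exp (lam * q' a + lam * q b) := by
        rw [Real.exp_add]
      rw [h1, h2]
      refine le_trans (abs_exp_sub_exp_le _ _) ?_
      apply mul_le_mul_of_nonneg_right _ (by positivity)
      have habs : |(lam * q a + lam * q' b) - (lam * q' a + lam * q b)|
          ≤ lam * |q a - q' a| + lam * |q b - q' b| := by
        have hrw : (lam * q a + lam * q' b) - (lam * q' a + lam * q b)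
            = lam * (q a - q' a) - lam * (q b - q' b) := by ring
        rw [hrw]
        refine le_trans (abs_sub _ _) ?_
        rw [abs_mul, abs_mul, abs_of_pos hlam]
      have h3 : lam * |q a - q' a| ≤ t := mul_le_mul_of_nonneg_left (hMa a) hlam.le
      have h4 : lam * |q b - q' b| ≤ t := mul_le_mul_of_nonneg_left (hMa b) hlam.le
      linarith
    rw [hdiff, hsum, abs_div, abs_of_pos (mul_pos hS hS'), ← mul_div_assoc,
      div_le_div_iff_of_pos_right (mul_pos hS hS')]
    exact hnum
  -- sums to one
  have hone : ∑ b : A, softmaxV lam q b = 1 := by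
    simp only [hsm]
    rw [← Finset.sum_div, ← hSdef, div_self hS.ne']
  have hone' : ∑ b : A, softmaxV lam q' b = 1 := by
    simp only [hsm']
    rw [← Finset.sum_div, ← hS'def, div_self hS'.ne']
  -- range bounds
  have hσ0 : ∀ a, 0 ≤ softmaxV lam q a := fun a => div_nonneg (Real.exp_pos _).le hS.le
  have hσ0' : ∀ a, 0 ≤ softmaxV lam q' a := fun a => div_nonneg (Real.exp_pos _).le hS'.le
  have hσ1 : ∀ a, softmaxV lam q a ≤ 1 := by
    intro a
    rw [hsm, div_le_one hS, hSdef]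
    exact Finset.single_le_sum (f := E) (fun b _ => (Real.exp_pos _).le) (mem_univ a)
  have hσ1' : ∀ a, softmaxV lam q' a ≤ 1 := by
    intro a
    rw [hsm', div_le_one hS', hS'def]
    exact Finset.single_le_sum (f := E') (fun b _ => (Real.exp_pos _).le) (mem_univ a)
  -- second key bound
  have key2 : ∀ a : A, |softmaxV lam q a - softmaxV lam q' a|
      ≤ t * ((1 - softmaxV lam q a) + (1 - softmaxV lam q' a)) := by
    intro a
    have h0 : ∑ b : A, (softmaxV lam q b - softmaxV lam q' b) = 0 := by
      rw [Finset.sum_sub_distrib, hone, hone']; ring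
    have hsplit := Finset.add_sum_erase Finset.univ
      (fun b => softmaxV lam q b - softmaxV lam q' b) (mem_univ a)
    have heq : softmaxV lam q a - softmaxV lam q' a
        = -∑ b ∈ Finset.univ.erase a, (softmaxV lam q b - softmaxV lam q' b) := by
      rw [h0] at hsplit
      linarith [hsplit]
    rw [heq, abs_neg]
    have e1 : ∑ b ∈ Finset.univ.erase a, softmaxV lam q b = 1 - softmaxV lam q a := by
      have h := Finset.add_sum_erase Finset.univ (fun b => softmaxV lam q b) (mem_univ a)
      rw [hone] at h
      linarith [h]
    have e2 : ∑ b ∈ Finset.univ.erase a, softmaxV lam q' b = 1 - softmaxV lam q' a := by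
      have h := Finset.add_sum_erase Finset.univ (fun b => softmaxV lam q' b) (mem_univ a)
      rw [hone'] at h
      linarith [h]
    calc |∑ b ∈ Finset.univ.erase a, (softmaxV lam q b - softmaxV lam q' b)|
        ≤ ∑ b ∈ Finset.univ.erase a, |softmaxV lam q b - softmaxV lam q' b| :=
          Finset.abs_sum_le_sum_abs _ _
      _ ≤ ∑ b ∈ Finset.univ.erase a, t * (softmaxV lam q b + softmaxV lam q' b) :=
          Finset.sum_le_sum (fun b _ => key1 b)
      _ = t * ((1 - softmaxV lam q a) + (1 - softmaxV lam q' a)) := by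
          rw [← Finset.mul_sum, Finset.sum_add_distrib, e1, e2]
  -- per-component square bound
  have hsq : ∀ a : A, (softmaxV lam q a - softmaxV lam q' a) ^ 2 ≤ t ^ 2 := by
    intro a
    have h1 := key1 a
    have h2 := key2 a
    have h3 := abs_nonneg (softmaxV lam q a - softmaxV lam q' a)
    have h4 := hσ0 a; have h5 := hσ0' a; have h6 := hσ1 a; have h7 := hσ1' a
    have hmul : |softmaxV lam q a - softmaxV lam q' a| * |softmaxV lam q a - softmaxV lam q' a|
        ≤ (t * (softmaxV lam q a + softmaxV lam q' a))
          * (t * ((1 - softmaxV lam q a) + (1 - softmaxV lam q' a))) :=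
      mul_le_mul h1 h2 h3 (by positivity)
    rw [← abs_mul, abs_mul_self] at hmul
    nlinarith [sq_nonneg (t * (softmaxV lam q a + softmaxV lam q' a - 1))]
  -- assemble
  have hsum2 : ∑ a : A, (softmaxV lam q a - softmaxV lam q' a) ^ 2
      ≤ (Fintype.card A : ℝ) * t ^ 2 := by
    calc ∑ a : A, (softmaxV lam q a - softmaxV lam q' a) ^ 2
        ≤ ∑ _a : A, t ^ 2 := Finset.sum_le_sum (fun a _ => hsq a)
      _ = (Fintype.card A : ℝ) * t ^ 2 := by
          rw [Finset.sum_const, Finset.card_univ, nsmul_eq_mul]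
  calc Real.sqrt (∑ a : A, (softmaxV lam q a - softmaxV lam q' a) ^ 2)
      ≤ Real.sqrt ((Fintype.card A : ℝ) * t ^ 2) := Real.sqrt_le_sqrt hsum2
    _ = Real.sqrt (Fintype.card A) * t := by
        rw [Real.sqrt_mul (by positivity), Real.sqrt_sq ht]
    _ = lam * Real.sqrt (Fintype.card A) * M := by rw [htdef]; ring
end

section
/- Let a > 0 and ν ∈ (0,1] be reals, and let 0 ≤ k ≤ t be integers such that a/(l+1)^ν ≤ 1 for every integer l with k+1 ≤ l ≤ t. Then ∏_{l=k+1}^{t} (1 − a/(l+1)^ν) ≤ ((k+2)/(t+2))^a. If moreover a ≥ ν, then the product is also at most ((k+2)/(t+2))^ν. -/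
open Finset Real

private lemma aux_factor (a ν : ℝ) (ha : 0 < a) (hν : 0 < ν) (hν1 : ν ≤ 1) (l : ℕ) :
    1 - a / ((l : ℝ) + 1) ^ ν ≤ (((l : ℝ) + 1) / ((l : ℝ) + 2)) ^ a := by
  have h1 : (1 : ℝ) ≤ (l : ℝ) + 1 := by
    have := Nat.cast_nonneg (α := ℝ) l; linarith
  have hpos : (0 : ℝ) < (l : ℝ) + 1 := by positivity
  have hpos2 : (0 : ℝ) < (l : ℝ) + 2 := by positivity
  have hpow : ((l : ℝ) + 1) ^ ν ≤ (l : ℝ) + 1 := by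
    calc ((l : ℝ) + 1) ^ ν ≤ ((l : ℝ) + 1) ^ (1 : ℝ) :=
          Real.rpow_le_rpow_of_exponent_le h1 hν1
      _ = (l : ℝ) + 1 := Real.rpow_one _
  have hppos : (0 : ℝ) < ((l : ℝ) + 1) ^ ν := Real.rpow_pos_of_pos hpos _
  have step1 : 1 - a / ((l : ℝ) + 1) ^ ν ≤ 1 - a / ((l : ℝ) + 1) := by
    gcongr
  have step2 : 1 - a / ((l : ℝ) + 1) ≤ Real.exp (-(a / ((l : ℝ) + 1))) := by
    have := Real.add_one_le_exp (-(a / ((l : ℝ) + 1)))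
    linarith
  have hlog : Real.log (((l : ℝ) + 2) / ((l : ℝ) + 1)) ≤ 1 / ((l : ℝ) + 1) := by
    have h := Real.log_le_sub_one_of_pos (x := ((l : ℝ) + 2) / ((l : ℝ) + 1)) (by positivity)
    have : ((l : ℝ) + 2) / ((l : ℝ) + 1) - 1 = 1 / ((l : ℝ) + 1) := by
      field_simp
      ring
    linarith
  have hlogeq : Real.log (((l : ℝ) + 1) / ((l : ℝ) + 2))
      = -Real.log (((l : ℝ) + 2) / ((l : ℝ) + 1)) := by
    rw [← Real.log_inv]
    congr 1
    field_simp
  have step3 : Real.exp (-(a / ((l : ℝ) + 1)))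
      ≤ Real.exp (Real.log (((l : ℝ) + 1) / ((l : ℝ) + 2)) * a) := by
    apply Real.exp_le_exp.mpr
    rw [hlogeq]
    have : a * Real.log (((l : ℝ) + 2) / ((l : ℝ) + 1)) ≤ a * (1 / ((l : ℝ) + 1)) := by
      exact mul_le_mul_of_nonneg_left hlog ha.le
    rw [div_eq_mul_one_div a ((l : ℝ) + 1)]
    linarith
  have hrpow : (((l : ℝ) + 1) / ((l : ℝ) + 2)) ^ a
      = Real.exp (Real.log (((l : ℝ) + 1) / ((l : ℝ) + 2)) * a) :=
    Real.rpow_def_of_pos (by positivity) a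
  rw [hrpow]
  exact le_trans step1 (le_trans step2 step3)

private lemma aux_telescope (k : ℕ) : ∀ t : ℕ, k ≤ t →
    (∏ l ∈ Finset.Icc (k + 1) t, (((l : ℝ) + 1) / ((l : ℝ) + 2)))
      = ((k : ℝ) + 2) / ((t : ℝ) + 2) := by
  intro t
  induction t with
  | zero =>
    intro hk
    interval_cases k
    simp
  | succ n ih =>
    intro hk
    rcases Nat.lt_or_ge k (n + 1) with h | h
    · have hkn : k ≤ n := Nat.lt_succ_iff.mp h
      rw [Finset.prod_Icc_succ_top (by omega : k + 1 ≤ n + 1), ih hkn]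
      push_cast
      have h1 : (n : ℝ) + 2 ≠ 0 := by positivity
      have h2 : (n : ℝ) + 1 + 2 ≠ 0 := by positivity
      field_simp
      ring
    · have : k = n + 1 := le_antisymm hk h
      subst this
      rw [Finset.Icc_eq_empty (by omega), Finset.prod_empty, eq_comm,
        div_eq_one_iff_eq (by positivity)]
/-- for `a > 0`, `ν ∈ (0,1]` and integers `k ≤ t` with `a/(l+1)^ν ≤ 1`
for `k+1 ≤ l ≤ t`, we have `∏_{l=k+1}^{t} (1 − a/(l+1)^ν) ≤ ((k+2)/(t+2))^a`, and if
moreover `a ≥ ν` the product is also at most `((k+2)/(t+2))^ν`. -/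
theorem prod_one_sub_step_le_rpow (a ν : ℝ) (ha : 0 < a) (hν : 0 < ν) (hν1 : ν ≤ 1)
    (k t : ℕ) (hkt : k ≤ t)
    (hsmall : ∀ l : ℕ, k + 1 ≤ l → l ≤ t → a / ((l : ℝ) + 1) ^ ν ≤ 1) :
    (∏ l ∈ Finset.Icc (k + 1) t, (1 - a / ((l : ℝ) + 1) ^ ν))
        ≤ (((k : ℝ) + 2) / ((t : ℝ) + 2)) ^ a
      ∧ (ν ≤ a →
        (∏ l ∈ Finset.Icc (k + 1) t, (1 - a / ((l : ℝ) + 1) ^ ν))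
          ≤ (((k : ℝ) + 2) / ((t : ℝ) + 2)) ^ ν) := by
  have hbase_pos : (0 : ℝ) < ((k : ℝ) + 2) / ((t : ℝ) + 2) := by positivity
  have hbase_le : ((k : ℝ) + 2) / ((t : ℝ) + 2) ≤ 1 := by
    rw [div_le_one (by positivity)]
    have : (k : ℝ) ≤ (t : ℝ) := by exact_mod_cast hkt
    linarith
  have hmain : (∏ l ∈ Finset.Icc (k + 1) t, (1 - a / ((l : ℝ) + 1) ^ ν))
      ≤ (((k : ℝ) + 2) / ((t : ℝ) + 2)) ^ a := by
    have hstep : (∏ l ∈ Finset.Icc (k + 1) t, (1 - a / ((l : ℝ) + 1) ^ ν))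
        ≤ ∏ l ∈ Finset.Icc (k + 1) t, (((l : ℝ) + 1) / ((l : ℝ) + 2)) ^ a := by
      apply Finset.prod_le_prod
      · intro l hl
        rw [Finset.mem_Icc] at hl
        have := hsmall l hl.1 hl.2
        linarith
      · intro l hl
        exact aux_factor a ν ha hν hν1 l
    have heq : (∏ l ∈ Finset.Icc (k + 1) t, (((l : ℝ) + 1) / ((l : ℝ) + 2)) ^ a)
        = (((k : ℝ) + 2) / ((t : ℝ) + 2)) ^ a := by
      rw [Real.finset_prod_rpow _ _ (fun l _ => by positivity) a,
        aux_telescope k t hkt]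
    rw [← heq]
    exact hstep
  refine ⟨hmain, fun hνa => hmain.trans ?_⟩
  exact Real.rpow_le_rpow_of_exponent_ge hbase_pos hbase_le hνa
end

section
/- Assume in addition c_β σ ≥ ν. Then for all integers 1 ≤ k ≤ t, β_{k,t} ≤ (c_β/(k+1)^ν) · ((k+2)/(t+2))^{c_β σ} ≤ 2 c_β/(t+2)^ν. -/
open Finset Real

/-- The step size `β_t = c_β/(t+1)^ν`. -/
noncomputable def betaStep (cβ ν : ℝ) (t : ℕ) : ℝ := cβ / ((t : ℝ) + 1) ^ ν

/-- `β_{k,t} = β_k ∏_{l=k+1}^{t} (1 − β_l σ)`. -/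
noncomputable def betaKT (cβ σ ν : ℝ) (k t : ℕ) : ℝ :=
  betaStep cβ ν k * ∏ l ∈ Finset.Icc (k + 1) t, (1 - betaStep cβ ν l * σ)

lemma teleprod (k : ℕ) : ∀ t : ℕ, k ≤ t →
    ∏ l ∈ Finset.Icc (k + 1) t, (((l : ℝ) + 1) / ((l : ℝ) + 2))
      = ((k : ℝ) + 2) / ((t : ℝ) + 2) := by
  intro t
  induction t with
  | zero =>
    intro h
    interval_cases k
    simp
  | succ n ih =>
    intro h
    by_cases hk : k ≤ n
    · rw [Finset.prod_Icc_succ_top (by omega : k + 1 ≤ n + 1), ih hk]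
      have h2 : ((n : ℝ) + 2) ≠ 0 := by positivity
      have h3 : ((n : ℝ) + 1 + 2) ≠ 0 := by positivity
      push_cast
      field_simp
      ring
    · have hkn : k = n + 1 := by omega
      subst hkn
      rw [Finset.Icc_eq_empty (by omega)]
      push_cast
      rw [Finset.prod_empty, div_self (by positivity)]

lemma factor_le (c ν : ℝ) (hc : 0 < c) (hν : 0 < ν) (hν1 : ν ≤ 1) (l : ℕ) :
    1 - c / ((l : ℝ) + 1) ^ ν ≤ (((l : ℝ) + 1) / ((l : ℝ) + 2)) ^ c := by
  set x : ℝ := (l : ℝ) + 1 with hxdef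
  have hl2 : (l : ℝ) + 2 = x + 1 := by rw [hxdef]; ring
  have hl0 : (0 : ℝ) ≤ l := Nat.cast_nonneg l
  have hx1 : 1 ≤ x := by rw [hxdef]; linarith
  have hxpos : 0 < x := by linarith
  have hx2 : (0 : ℝ) < x + 1 := by linarith
  have hlog : Real.log ((x + 1) / x) ≤ 1 / x := by
    have h1 := Real.log_le_sub_one_of_pos (show 0 < (x + 1) / x by positivity)
    have h2 : (x + 1) / x - 1 = 1 / x := by field_simp; ring
    linarith
  have hpow : x ^ ν ≤ x := by
    calc x ^ ν ≤ x ^ (1 : ℝ) := Real.rpow_le_rpow_of_exponent_le hx1 hν1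
    _ = x := Real.rpow_one x
  have hxν : 0 < x ^ ν := Real.rpow_pos_of_pos hxpos ν
  rw [hl2]
  have key : c * Real.log ((x + 1) / x) ≤ c / x ^ ν := by
    have h1x : 1 / x ≤ 1 / x ^ ν := one_div_le_one_div_of_le hxν hpow
    calc c * Real.log ((x + 1) / x) ≤ c * (1 / x) :=
          mul_le_mul_of_nonneg_left hlog hc.le
      _ ≤ c * (1 / x ^ ν) := mul_le_mul_of_nonneg_left h1x hc.le
      _ = c / x ^ ν := by ring
  have hlogneg : Real.log (x / (x + 1)) = -Real.log ((x + 1) / x) := by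
    rw [← Real.log_inv]
    congr 1
    field_simp
  calc 1 - c / x ^ ν ≤ Real.exp (-(c / x ^ ν)) := by
        linarith [Real.add_one_le_exp (-(c / x ^ ν))]
    _ ≤ Real.exp (Real.log (x / (x + 1)) * c) := by
        apply Real.exp_le_exp.mpr
        rw [hlogneg]
        nlinarith [key]
    _ = (x / (x + 1)) ^ c := (Real.rpow_def_of_pos (by positivity) c).symm

/-- if `c_β σ ≥ ν` then for all `1 ≤ k ≤ t`,
`β_{k,t} ≤ (c_β/(k+1)^ν)((k+2)/(t+2))^{c_β σ} ≤ 2 c_β/(t+2)^ν`. -/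
theorem betaKT_le (cβ σ ν : ℝ) (hcβ : 0 < cβ) (hσ : 0 < σ) (hσ1 : σ ≤ 1)
    (hν : 0 < ν) (hν1 : ν ≤ 1) (t : ℕ)
    (hsmall : ∀ l : ℕ, l ≤ t → betaStep cβ ν l * σ ≤ 1)
    (hcσν : ν ≤ cβ * σ) :
    ∀ k : ℕ, 1 ≤ k → k ≤ t →
      betaKT cβ σ ν k t
          ≤ cβ / ((k : ℝ) + 1) ^ ν * (((k : ℝ) + 2) / ((t : ℝ) + 2)) ^ (cβ * σ)
        ∧ cβ / ((k : ℝ) + 1) ^ ν * (((k : ℝ) + 2) / ((t : ℝ) + 2)) ^ (cβ * σ)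
          ≤ 2 * cβ / ((t : ℝ) + 2) ^ ν := by
  intro k hk1 hkt
  have hc : 0 < cβ * σ := mul_pos hcβ hσ
  have hkpos : (0 : ℝ) < (k : ℝ) + 1 := by positivity
  have htpos : (0 : ℝ) < (t : ℝ) + 2 := by positivity
  have hβk : 0 ≤ betaStep cβ ν k := by
    unfold betaStep; positivity
  constructor
  · -- first inequality
    have hprod : ∏ l ∈ Finset.Icc (k + 1) t, (1 - betaStep cβ ν l * σ)
        ≤ ∏ l ∈ Finset.Icc (k + 1) t, (((l : ℝ) + 1) / ((l : ℝ) + 2)) ^ (cβ * σ) := by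
      apply Finset.prod_le_prod
      · intro l hl
        rw [Finset.mem_Icc] at hl
        linarith [hsmall l hl.2]
      · intro l hl
        have := factor_le (cβ * σ) ν hc hν hν1 l
        unfold betaStep
        calc 1 - cβ / ((l : ℝ) + 1) ^ ν * σ
            = 1 - cβ * σ / ((l : ℝ) + 1) ^ ν := by ring
          _ ≤ _ := this
    have heq : ∏ l ∈ Finset.Icc (k + 1) t, (((l : ℝ) + 1) / ((l : ℝ) + 2)) ^ (cβ * σ)
        = (((k : ℝ) + 2) / ((t : ℝ) + 2)) ^ (cβ * σ) := by
      rw [Real.finset_prod_rpow _ _ (fun l _ => by positivity), teleprod k t hkt]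
    unfold betaKT
    have : betaStep cβ ν k = cβ / ((k : ℝ) + 1) ^ ν := rfl
    rw [this]
    rw [heq] at hprod
    exact mul_le_mul_of_nonneg_left hprod (by positivity)
  · -- second inequality
    have hbase0 : (0 : ℝ) < ((k : ℝ) + 2) / ((t : ℝ) + 2) := by positivity
    have hbase1 : ((k : ℝ) + 2) / ((t : ℝ) + 2) ≤ 1 := by
      rw [div_le_one htpos]
      have : (k : ℝ) ≤ t := Nat.cast_le.mpr hkt
      linarith
    have h1 : (((k : ℝ) + 2) / ((t : ℝ) + 2)) ^ (cβ * σ)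
        ≤ (((k : ℝ) + 2) / ((t : ℝ) + 2)) ^ ν :=
      Real.rpow_le_rpow_of_exponent_ge hbase0 hbase1 hcσν
    have h2 : (((k : ℝ) + 2) / ((t : ℝ) + 2)) ^ ν
        = ((k : ℝ) + 2) ^ ν / ((t : ℝ) + 2) ^ ν :=
      Real.div_rpow (by positivity) htpos.le ν
    have h3 : ((k : ℝ) + 2) ^ ν ≤ 2 * ((k : ℝ) + 1) ^ ν := by
      have e1 : ((k : ℝ) + 2) ^ ν ≤ (2 * ((k : ℝ) + 1)) ^ ν := by
        apply Real.rpow_le_rpow (by positivity) (by linarith [hkpos]) hν.le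
      have e2 : (2 * ((k : ℝ) + 1)) ^ ν = (2 : ℝ) ^ ν * ((k : ℝ) + 1) ^ ν :=
        Real.mul_rpow (by norm_num) hkpos.le
      have e3 : (2 : ℝ) ^ ν ≤ 2 := by
        calc (2 : ℝ) ^ ν ≤ (2 : ℝ) ^ (1 : ℝ) :=
              Real.rpow_le_rpow_of_exponent_le (by norm_num) hν1
          _ = 2 := Real.rpow_one 2
      have hkν : 0 ≤ ((k : ℝ) + 1) ^ ν := (Real.rpow_pos_of_pos hkpos ν).le
      nlinarith
    have hkν : 0 < ((k : ℝ) + 1) ^ ν := Real.rpow_pos_of_pos hkpos ν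
    have htν : 0 < ((t : ℝ) + 2) ^ ν := Real.rpow_pos_of_pos htpos ν
    calc cβ / ((k : ℝ) + 1) ^ ν * (((k : ℝ) + 2) / ((t : ℝ) + 2)) ^ (cβ * σ)
        ≤ cβ / ((k : ℝ) + 1) ^ ν * (((k : ℝ) + 2) ^ ν / ((t : ℝ) + 2) ^ ν) := by
          rw [← h2]
          exact mul_le_mul_of_nonneg_left h1 (by positivity)
      _ ≤ 2 * cβ / ((t : ℝ) + 2) ^ ν := by
          have heq : cβ / ((k : ℝ) + 1) ^ ν * (((k : ℝ) + 2) ^ ν / ((t : ℝ) + 2) ^ ν)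
              = cβ * ((k : ℝ) + 2) ^ ν / (((k : ℝ) + 1) ^ ν * ((t : ℝ) + 2) ^ ν) := by
            ring
          rw [heq, div_le_div_iff₀ (by positivity) htν]
          nlinarith [mul_le_mul_of_nonneg_left h3 hcβ.le, htν.le, hkν.le]
end

section
/- Assume in addition 2 c_β σ − 2ν + 1 > 0. Then for every integer t ≥ 1, Σ_{k=1}^{t} β_{k,t}² ≤ (4^{c_β σ} c_β² / (2 c_β σ − 2ν + 1)) · (t+2)^{1−2ν}. -/
open Finset Real

/-- Telescoping product `∏_{l=k+1}^{t} (l+1)/(l+2) = (k+2)/(t+2)`. -/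
lemma prod_telescope_aux (k t : ℕ) (h : k ≤ t) :
    ∏ l ∈ Finset.Icc (k + 1) t, (((l:ℝ)+1)/((l:ℝ)+2)) = ((k:ℝ)+2)/((t:ℝ)+2) := by
  induction t, h using Nat.le_induction with
  | base => rw [Finset.Icc_eq_empty (by omega), Finset.prod_empty, div_self (by positivity)]
  | succ n hn ih =>
      rw [Finset.prod_Icc_succ_top (by omega), ih]
      push_cast
      field_simp
      ring

/-- Key single-factor bound: `1 - a/b^ν ≤ (b/(b+1))^a`. -/
lemma factor_le_aux (a ν b : ℝ) (ha : 0 < a) (hν1 : ν ≤ 1) (hb : 1 ≤ b) :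
    1 - a / b ^ ν ≤ (b / (b + 1)) ^ a := by
  have hb0 : (0:ℝ) < b := lt_of_lt_of_le one_pos hb
  have hbν : b ^ ν ≤ b := by
    calc b ^ ν ≤ b ^ (1:ℝ) := Real.rpow_le_rpow_of_exponent_le hb hν1
    _ = b := Real.rpow_one b
  have hbνpos : (0:ℝ) < b ^ ν := Real.rpow_pos_of_pos hb0 ν
  have h1 : a / b ≤ a / b ^ ν := div_le_div_of_nonneg_left ha.le hbνpos hbν
  have h2 : 1 - a / b ^ ν ≤ 1 - a / b := by linarith
  rcases le_or_gt (1 - a / b) 0 with h | h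
  · exact le_trans (h2.trans h) (Real.rpow_nonneg (by positivity) a)
  · have hX : (0:ℝ) < (1 + 1/b) ^ a := Real.rpow_pos_of_pos (by positivity) a
    have key : (1 - a / b) * (1 + 1/b) ^ a ≤ 1 := by
      have e1 : (1 + 1/b) ^ a ≤ Real.exp (a / b) := by
        calc (1 + 1/b) ^ a ≤ (Real.exp (1/b)) ^ a :=
              Real.rpow_le_rpow (by positivity) (by linarith [Real.add_one_le_exp (1/b)]) ha.le
        _ = Real.exp (a / b) := by rw [← Real.exp_mul]; ring_nf
      have e2 : 1 - a / b ≤ Real.exp (-(a / b)) := by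
        linarith [Real.add_one_le_exp (-(a/b))]
      calc (1 - a / b) * (1 + 1/b) ^ a ≤ Real.exp (-(a/b)) * Real.exp (a/b) :=
            mul_le_mul e2 e1 hX.le (Real.exp_pos _).le
      _ = 1 := by rw [← Real.exp_add]; simp
    have h3 : 1 - a / b ≤ ((1 + 1/b) ^ a)⁻¹ := by
      rw [inv_eq_one_div, le_div_iff₀ hX]
      exact key
    refine h2.trans ?_
    calc 1 - a / b ≤ ((1 + 1/b) ^ a)⁻¹ := h3
    _ = ((1 + 1/b)⁻¹) ^ a := (Real.inv_rpow (by positivity) a).symm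
    _ = (b / (b + 1)) ^ a := by
        congr 1
        rw [inv_eq_one_div]
        field_simp

/-- Sum–integral comparison: for `q > -1`, `∑_{k=1}^t (k+1)^q ≤ (t+2)^{q+1}/(q+1)`. -/
lemma sum_rpow_le_aux (q : ℝ) (hq : -1 < q) (t : ℕ) :
    ∑ k ∈ Finset.Icc 1 t, ((k:ℝ)+1) ^ q ≤ ((t:ℝ)+2) ^ (q+1) / (q+1) := by
  have hq1 : (0:ℝ) < q + 1 := by linarith
  rcases le_or_gt 0 q with hq0 | hq0
  · induction t with
    | zero => simp [show Finset.Icc 1 0 = (∅ : Finset ℕ) from rfl]; positivity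
    | succ n ih =>
        rw [Finset.sum_Icc_succ_top (by omega)]
        have hx : (0:ℝ) < (n:ℝ) + 2 := by positivity
        have key : (q+1) * ((n:ℝ)+2) ^ q + ((n:ℝ)+2) ^ (q+1) ≤ ((n:ℝ)+3) ^ (q+1) := by
          have hber : 1 + (q+1) * (1/((n:ℝ)+2)) ≤ (1 + 1/((n:ℝ)+2)) ^ (q+1) :=
            one_add_mul_self_le_rpow_one_add (by
              have : (0:ℝ) ≤ 1/((n:ℝ)+2) := by positivity
              linarith) (by linarith)
          have hsplit : ((n:ℝ)+3) ^ (q+1) = ((n:ℝ)+2) ^ (q+1) * (1 + 1/((n:ℝ)+2)) ^ (q+1) := by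
            rw [← Real.mul_rpow hx.le (by positivity)]
            congr 1
            field_simp
            ring
          rw [hsplit]
          have h2 : ((n:ℝ)+2) ^ (q+1) * (1 + (q+1) * (1/((n:ℝ)+2)))
              ≤ ((n:ℝ)+2) ^ (q+1) * (1 + 1/((n:ℝ)+2)) ^ (q+1) :=
            mul_le_mul_of_nonneg_left hber (by positivity)
          have h3 : ((n:ℝ)+2) ^ (q+1) * (1/((n:ℝ)+2)) = ((n:ℝ)+2) ^ q := by
            rw [mul_one_div, ← Real.rpow_sub_one hx.ne']
            norm_num
          nlinarith [h2, h3]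
        push_cast
        calc (∑ k ∈ Finset.Icc 1 n, ((k:ℝ)+1) ^ q) + ((n:ℝ)+1+1) ^ q
            ≤ ((n:ℝ)+2) ^ (q+1)/(q+1) + ((n:ℝ)+2) ^ q := by
              have : ((n:ℝ)+1+1) = ((n:ℝ)+2) := by ring
              rw [this]; linarith [ih]
        _ ≤ ((n:ℝ)+1+2) ^ (q+1)/(q+1) := by
              rw [div_add' _ _ _ hq1.ne', div_le_div_iff_of_pos_right hq1]
              have : ((n:ℝ)+1+2) = ((n:ℝ)+3) := by ring
              rw [this]; linarith [key]
  · have main : ∑ k ∈ Finset.Icc 1 t, ((k:ℝ)+1) ^ q ≤ ((t:ℝ)+1) ^ (q+1) / (q+1) := by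
      induction t with
      | zero => simp [show Finset.Icc 1 0 = (∅ : Finset ℕ) from rfl]; positivity
      | succ n ih =>
          rw [Finset.sum_Icc_succ_top (by omega)]
          have hx : (0:ℝ) < (n:ℝ) + 2 := by positivity
          have key : (q+1) * ((n:ℝ)+2) ^ q + ((n:ℝ)+1) ^ (q+1) ≤ ((n:ℝ)+2) ^ (q+1) := by
            have hber : (1 + -(1/((n:ℝ)+2))) ^ (q+1) ≤ 1 + (q+1) * -(1/((n:ℝ)+2)) :=
              rpow_one_add_le_one_add_mul_self (by
                have : (1:ℝ)/((n:ℝ)+2) ≤ 1 := by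
                  rw [div_le_one hx]; linarith
                linarith) hq1.le (by linarith)
            have hsplit : ((n:ℝ)+1) ^ (q+1) = ((n:ℝ)+2) ^ (q+1) * (1 + -(1/((n:ℝ)+2))) ^ (q+1) := by
              rw [← Real.mul_rpow hx.le (by
                have : (1:ℝ)/((n:ℝ)+2) ≤ 1 := by rw [div_le_one hx]; linarith
                linarith)]
              congr 1
              field_simp
              ring
            have h2 : ((n:ℝ)+2) ^ (q+1) * (1 + -(1/((n:ℝ)+2))) ^ (q+1)
                ≤ ((n:ℝ)+2) ^ (q+1) * (1 + (q+1) * -(1/((n:ℝ)+2))) :=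
              mul_le_mul_of_nonneg_left hber (by positivity)
            have h3 : ((n:ℝ)+2) ^ (q+1) * (1/((n:ℝ)+2)) = ((n:ℝ)+2) ^ q := by
              rw [mul_one_div, ← Real.rpow_sub_one hx.ne']
              norm_num
            rw [hsplit]
            nlinarith [h2, h3]
          push_cast
          calc (∑ k ∈ Finset.Icc 1 n, ((k:ℝ)+1) ^ q) + ((n:ℝ)+1+1) ^ q
              ≤ ((n:ℝ)+1) ^ (q+1)/(q+1) + ((n:ℝ)+2) ^ q := by
                have : ((n:ℝ)+1+1) = ((n:ℝ)+2) := by ring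
                rw [this]; linarith [ih]
          _ ≤ ((n:ℝ)+1+1) ^ (q+1)/(q+1) := by
                rw [div_add' _ _ _ hq1.ne', div_le_div_iff_of_pos_right hq1]
                have : ((n:ℝ)+1+1) = ((n:ℝ)+2) := by ring
                rw [this]; linarith [key]
    refine main.trans ?_
    have : ((t:ℝ)+1) ^ (q+1) ≤ ((t:ℝ)+2) ^ (q+1) :=
      Real.rpow_le_rpow (by positivity) (by linarith) hq1.le
    exact (div_le_div_iff_of_pos_right hq1).mpr this

/-- if `2 c_β σ − 2ν + 1 > 0`, then for every `t ≥ 1`,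
`Σ_{k=1}^{t} β_{k,t}² ≤ (4^{c_β σ} c_β² / (2 c_β σ − 2ν + 1)) (t+2)^{1−2ν}`. -/
theorem sum_betaKT_sq_le (cβ σ ν : ℝ) (hcβ : 0 < cβ) (hσ : 0 < σ) (hσ1 : σ ≤ 1)
    (hν : 0 < ν) (hν1 : ν ≤ 1) (t : ℕ) (ht : 1 ≤ t)
    (hsmall : ∀ l : ℕ, l ≤ t → betaStep cβ ν l * σ ≤ 1)
    (hpos : 0 < 2 * (cβ * σ) - 2 * ν + 1) :
    ∑ k ∈ Finset.Icc 1 t, betaKT cβ σ ν k t ^ 2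
      ≤ (4 : ℝ) ^ (cβ * σ) * cβ ^ 2 / (2 * (cβ * σ) - 2 * ν + 1)
          * ((t : ℝ) + 2) ^ (1 - 2 * ν) := by
  set a : ℝ := cβ * σ with ha_def
  have ha : 0 < a := mul_pos hcβ hσ
  set q : ℝ := 2 * a - 2 * ν with hq_def
  have hq : -1 < q := by simp only [hq_def]; linarith
  have hq1 : (0:ℝ) < q + 1 := by linarith
  have hT : (0:ℝ) < (t:ℝ) + 2 := by positivity
  have hTa : (0:ℝ) < ((t:ℝ) + 2) ^ (2*a) := Real.rpow_pos_of_pos hT _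
  -- pointwise bound
  have hpoint : ∀ k ∈ Finset.Icc 1 t,
      betaKT cβ σ ν k t ^ 2
        ≤ (4:ℝ) ^ a * cβ ^ 2 / ((t:ℝ)+2) ^ (2*a) * ((k:ℝ)+1) ^ q := by
    intro k hk
    rw [Finset.mem_Icc] at hk
    have hK : (0:ℝ) < (k:ℝ) + 1 := by positivity
    have hKν : (0:ℝ) < ((k:ℝ)+1) ^ ν := Real.rpow_pos_of_pos hK ν
    have hstep : (0:ℝ) < betaStep cβ ν k := div_pos hcβ hKν
    -- the product is between 0 and ((k+2)/(t+2))^a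
    have hprod_nonneg : (0:ℝ) ≤ ∏ l ∈ Finset.Icc (k+1) t, (1 - betaStep cβ ν l * σ) := by
      refine Finset.prod_nonneg ?_
      intro l hl
      rw [Finset.mem_Icc] at hl
      linarith [hsmall l hl.2]
    have hprod_le : ∏ l ∈ Finset.Icc (k+1) t, (1 - betaStep cβ ν l * σ)
        ≤ (((k:ℝ)+2)/((t:ℝ)+2)) ^ a := by
      have step : ∀ l ∈ Finset.Icc (k+1) t,
          1 - betaStep cβ ν l * σ ≤ ((((l:ℝ)+1)/((l:ℝ)+2))) ^ a := by
        intro l hl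
        rw [Finset.mem_Icc] at hl
        have hL : (1:ℝ) ≤ (l:ℝ) + 1 := by
          have : (0:ℝ) ≤ (l:ℝ) := Nat.cast_nonneg l
          linarith
        have : betaStep cβ ν l * σ = a / ((l:ℝ)+1) ^ ν := by
          simp only [betaStep, ha_def]
          ring
        rw [this]
        have := factor_le_aux a ν ((l:ℝ)+1) ha hν1 hL
        calc 1 - a / ((l:ℝ)+1) ^ ν ≤ (((l:ℝ)+1) / (((l:ℝ)+1) + 1)) ^ a := this
        _ = (((l:ℝ)+1)/((l:ℝ)+2)) ^ a := by ring_nf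
      calc ∏ l ∈ Finset.Icc (k+1) t, (1 - betaStep cβ ν l * σ)
          ≤ ∏ l ∈ Finset.Icc (k+1) t, ((((l:ℝ)+1)/((l:ℝ)+2))) ^ a := by
            refine Finset.prod_le_prod ?_ step
            intro l hl
            rw [Finset.mem_Icc] at hl
            linarith [hsmall l hl.2]
      _ = (∏ l ∈ Finset.Icc (k+1) t, (((l:ℝ)+1)/((l:ℝ)+2))) ^ a := by
            rw [← Real.finset_prod_rpow _ _ (fun l _ => by positivity) a]
      _ = (((k:ℝ)+2)/((t:ℝ)+2)) ^ a := by rw [prod_telescope_aux k t hk.2]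
    have hKT_nonneg : 0 ≤ betaKT cβ σ ν k t := mul_nonneg hstep.le hprod_nonneg
    have hKT_le : betaKT cβ σ ν k t ≤ betaStep cβ ν k * (((k:ℝ)+2)/((t:ℝ)+2)) ^ a :=
      mul_le_mul_of_nonneg_left hprod_le hstep.le
    have hsq : betaKT cβ σ ν k t ^ 2
        ≤ (betaStep cβ ν k * (((k:ℝ)+2)/((t:ℝ)+2)) ^ a) ^ 2 :=
      pow_le_pow_left₀ hKT_nonneg hKT_le 2
    refine hsq.trans ?_
    -- now a pure rpow computation/estimate
    have hrpow_sq : ∀ x : ℝ, 0 < x → ∀ c : ℝ, (x ^ c) ^ 2 = x ^ (2*c) := by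
      intro x hx c
      rw [sq, ← Real.rpow_add hx]
      ring_nf
    have expand : (betaStep cβ ν k * (((k:ℝ)+2)/((t:ℝ)+2)) ^ a) ^ 2
        = cβ ^ 2 / ((k:ℝ)+1) ^ (2*ν) * (((k:ℝ)+2) ^ (2*a) / ((t:ℝ)+2) ^ (2*a)) := by
      rw [mul_pow, hrpow_sq _ (by positivity) a]
      rw [Real.div_rpow (by positivity) hT.le]
      simp only [betaStep]
      rw [div_pow, hrpow_sq _ hK ν]
    rw [expand]
    have hk2 : ((k:ℝ)+2) ^ (2*a) ≤ (4:ℝ) ^ a * ((k:ℝ)+1) ^ (2*a) := by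
      have h1 : ((k:ℝ)+2) ≤ 2 * ((k:ℝ)+1) := by linarith
      calc ((k:ℝ)+2) ^ (2*a) ≤ (2 * ((k:ℝ)+1)) ^ (2*a) :=
            Real.rpow_le_rpow (by positivity) h1 (by positivity)
      _ = (2:ℝ) ^ (2*a) * ((k:ℝ)+1) ^ (2*a) := Real.mul_rpow (by norm_num) hK.le
      _ = (4:ℝ) ^ a * ((k:ℝ)+1) ^ (2*a) := by
            have h4 : (2:ℝ) ^ (2*a) = (4:ℝ) ^ a := by
              rw [show (4:ℝ) = 2 ^ (2:ℕ) by norm_num, ← Real.rpow_natCast 2 2,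
                ← Real.rpow_mul (by norm_num : (0:ℝ) ≤ 2)]
              norm_num
            rw [h4]
    have hKq : ((k:ℝ)+1) ^ (2*a) / ((k:ℝ)+1) ^ (2*ν) = ((k:ℝ)+1) ^ q := by
      rw [← Real.rpow_sub hK]
    calc cβ ^ 2 / ((k:ℝ)+1) ^ (2*ν) * (((k:ℝ)+2) ^ (2*a) / ((t:ℝ)+2) ^ (2*a))
        ≤ cβ ^ 2 / ((k:ℝ)+1) ^ (2*ν) * (((4:ℝ) ^ a * ((k:ℝ)+1) ^ (2*a)) / ((t:ℝ)+2) ^ (2*a)) := by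
          refine mul_le_mul_of_nonneg_left ?_ (by positivity)
          exact (div_le_div_iff_of_pos_right hTa).mpr hk2
    _ = (4:ℝ) ^ a * cβ ^ 2 / ((t:ℝ)+2) ^ (2*a) * ((k:ℝ)+1) ^ q := by
          rw [← hKq]
          field_simp
  -- sum everything
  calc ∑ k ∈ Finset.Icc 1 t, betaKT cβ σ ν k t ^ 2
      ≤ ∑ k ∈ Finset.Icc 1 t, (4:ℝ) ^ a * cβ ^ 2 / ((t:ℝ)+2) ^ (2*a) * ((k:ℝ)+1) ^ q :=
        Finset.sum_le_sum hpoint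
  _ = (4:ℝ) ^ a * cβ ^ 2 / ((t:ℝ)+2) ^ (2*a) * ∑ k ∈ Finset.Icc 1 t, ((k:ℝ)+1) ^ q :=
        (Finset.mul_sum _ _ _).symm
  _ ≤ (4:ℝ) ^ a * cβ ^ 2 / ((t:ℝ)+2) ^ (2*a) * (((t:ℝ)+2) ^ (q+1) / (q+1)) :=
        mul_le_mul_of_nonneg_left (sum_rpow_le_aux q hq t) (by positivity)
  _ = (4:ℝ) ^ a * cβ ^ 2 / (2 * (cβ * σ) - 2 * ν + 1) * ((t:ℝ)+2) ^ (1 - 2*ν) := by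
        have hsplit : ((t:ℝ)+2) ^ (q+1) = ((t:ℝ)+2) ^ (2*a) * ((t:ℝ)+2) ^ (1-2*ν) := by
          rw [← Real.rpow_add hT]
          congr 1
          simp only [hq_def]
          ring
        have hden : 2 * (cβ * σ) - 2 * ν + 1 = q + 1 := by simp only [hq_def, ha_def]
        rw [hsplit, hden]
        field_simp
end

section
/- Assume in addition c_β σ − 2ν + 1 > 0, and let τ ≥ 1 be an integer with τ ≤ t. Then Σ_{k=τ}^{t} β_{k,t} · (Σ_{l=k−τ}^{k−1} β_l) ≤ (2^{c_β σ} c_β² τ (τ+1)^ν / (c_β σ − 2ν + 1)) · (t+2)^{1−2ν}. -/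
open Finset Real

lemma prod_ratio (k t : ℕ) (h : k ≤ t) :
    ∏ l ∈ Finset.Icc (k+1) t, (((l:ℝ)+1)/((l:ℝ)+2)) = ((k:ℝ)+2)/((t:ℝ)+2) := by
  induction t with
  | zero =>
      have : k = 0 := Nat.le_zero.mp h
      subst this; simp
  | succ n ih =>
      rcases Nat.eq_or_lt_of_le h with rfl | hlt
      · rw [Finset.Icc_eq_empty (by omega), Finset.prod_empty]
        have : ((n:ℝ)+1+2) ≠ 0 := by positivity
        push_cast
        field_simp
      · have hk : k ≤ n := by omega
        rw [Finset.prod_Icc_succ_top (by omega : k+1 ≤ n+1), ih hk]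
        push_cast
        have h1 : ((n:ℝ)+2) ≠ 0 := by positivity
        have h2 : ((n:ℝ)+1+2) ≠ 0 := by positivity
        field_simp
        ring

lemma factor_le_s5 {a b : ℝ} (ha : 0 < a) (l : ℕ) (hba : a/((l:ℝ)+1) ≤ b) :
    1 - b ≤ (((l:ℝ)+1)/((l:ℝ)+2))^a := by
  have hl1 : (0:ℝ) < (l:ℝ)+1 := by positivity
  have hr : (0:ℝ) < ((l:ℝ)+1)/((l:ℝ)+2) := by positivity
  have hlog : Real.log (((l:ℝ)+2)/((l:ℝ)+1)) ≤ 1/((l:ℝ)+1) := by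
    have h1 := Real.log_le_sub_one_of_pos (show (0:ℝ) < ((l:ℝ)+2)/((l:ℝ)+1) by positivity)
    have h2 : ((l:ℝ)+2)/((l:ℝ)+1) - 1 = 1/((l:ℝ)+1) := by
      rw [div_sub_one hl1.ne']
      congr 1
      ring
    linarith
  calc 1 - b ≤ Real.exp (-b) := by linarith [Real.add_one_le_exp (-b)]
    _ ≤ (((l:ℝ)+1)/((l:ℝ)+2))^a := by
        rw [Real.rpow_def_of_pos hr]
        apply Real.exp_le_exp.mpr
        have hlogr : Real.log (((l:ℝ)+1)/((l:ℝ)+2)) = - Real.log (((l:ℝ)+2)/((l:ℝ)+1)) := by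
          rw [← Real.log_inv]
          congr 1
          rw [inv_div]
        rw [hlogr]
        have h3 : a * Real.log (((l:ℝ)+2)/((l:ℝ)+1)) ≤ a * (1/((l:ℝ)+1)) :=
          mul_le_mul_of_nonneg_left hlog ha.le
        rw [mul_one_div] at h3
        nlinarith


lemma sum_rpow_le {p : ℝ} (hp : -1 < p) (n : ℕ) :
    ∑ k ∈ Finset.range n, ((k:ℝ)+1)^p ≤ ((n:ℝ)+1)^(p+1)/(p+1) := by
  have hq : 0 < p + 1 := by linarith
  rcases le_or_gt 0 p with hp0 | hp0
  · induction n with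
    | zero => simp; positivity
    | succ m ih =>
      rw [Finset.sum_range_succ]
      have hx : (0:ℝ) < (m:ℝ)+1 := by positivity
      have hbern := one_add_mul_self_le_rpow_one_add
        (s := 1/((m:ℝ)+1))
        (by have : (0:ℝ) ≤ 1/((m:ℝ)+1) := by positivity
            linarith) (p := p+1) (by linarith)
      have e0 : (1:ℝ) + 1/((m:ℝ)+1) = ((m:ℝ)+2)/((m:ℝ)+1) := by
        rw [eq_div_iff hx.ne', add_mul, one_mul, one_div_mul_cancel hx.ne']; ring
      rw [e0, Real.div_rpow (by positivity) hx.le] at hbern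
      have hP : (0:ℝ) < ((m:ℝ)+1)^(p+1) := Real.rpow_pos_of_pos hx _
      have hpq : ((m:ℝ)+1)^(p+1) = ((m:ℝ)+1)^p * ((m:ℝ)+1) := Real.rpow_add_one hx.ne' p
      have h2 := mul_le_mul_of_nonneg_left hbern hP.le
      have h3 : ((m:ℝ)+1)^(p+1) * (((m:ℝ)+2)^(p+1)/((m:ℝ)+1)^(p+1)) = ((m:ℝ)+2)^(p+1) := by
        field_simp
      have h4 : ((m:ℝ)+1)^(p+1) * (1 + (p+1)*(1/((m:ℝ)+1))) =
          ((m:ℝ)+1)^(p+1) + (p+1)*((m:ℝ)+1)^p := by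
        rw [hpq]; field_simp
      have h1 : ((m:ℝ)+1)^(p+1) + (p+1)*((m:ℝ)+1)^p ≤ ((m:ℝ)+2)^(p+1) := by linarith
      have h6 : (((m:ℝ)+1)^(p+1) + (p+1)*((m:ℝ)+1)^p)/(p+1) ≤ ((m:ℝ)+2)^(p+1)/(p+1) := by
        gcongr
      have h7 : (((m:ℝ)+1)^(p+1) + (p+1)*((m:ℝ)+1)^p)/(p+1) =
          ((m:ℝ)+1)^(p+1)/(p+1) + ((m:ℝ)+1)^p := by
        field_simp
      push_cast
      rw [show ((m:ℝ)+1+1) = (m:ℝ)+2 from by ring]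
      linarith [ih]
  · have key : ∀ n : ℕ, ∑ k ∈ Finset.range n, ((k:ℝ)+1)^p ≤ (n:ℝ)^(p+1)/(p+1) := by
      intro n
      induction n with
      | zero => simp [Real.zero_rpow hq.ne']
      | succ m ih =>
        rw [Finset.sum_range_succ]
        have hx : (0:ℝ) < (m:ℝ)+1 := by positivity
        have hs : (-1:ℝ) ≤ -(1/((m:ℝ)+1)) := by
          have h1 : 1/((m:ℝ)+1) ≤ 1 := by
            rw [div_le_one hx]; linarith [Nat.cast_nonneg (α := ℝ) m]
          linarith
        have hbern := rpow_one_add_le_one_add_mul_self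
          (s := -(1/((m:ℝ)+1))) hs (p := p+1) hq.le (by linarith)
        have e0 : (1:ℝ) + -(1/((m:ℝ)+1)) = (m:ℝ)/((m:ℝ)+1) := by
          rw [eq_div_iff hx.ne', add_mul, one_mul, neg_mul, one_div_mul_cancel hx.ne']; ring
        rw [e0, Real.div_rpow (Nat.cast_nonneg m) hx.le] at hbern
        have hP : (0:ℝ) < ((m:ℝ)+1)^(p+1) := Real.rpow_pos_of_pos hx _
        have hpq : ((m:ℝ)+1)^(p+1) = ((m:ℝ)+1)^p * ((m:ℝ)+1) := Real.rpow_add_one hx.ne' p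
        have h2 := mul_le_mul_of_nonneg_left hbern hP.le
        have h3 : ((m:ℝ)+1)^(p+1) * ((m:ℝ)^(p+1)/((m:ℝ)+1)^(p+1)) = (m:ℝ)^(p+1) := by
          field_simp
        have h4 : ((m:ℝ)+1)^(p+1) * (1 + (p+1)*(-(1/((m:ℝ)+1)))) =
            ((m:ℝ)+1)^(p+1) - (p+1)*((m:ℝ)+1)^p := by
          rw [hpq]; field_simp; ring
        have h1 : (m:ℝ)^(p+1) ≤ ((m:ℝ)+1)^(p+1) - (p+1)*((m:ℝ)+1)^p := by linarith
        have h6 : (m:ℝ)^(p+1)/(p+1) ≤ (((m:ℝ)+1)^(p+1) - (p+1)*((m:ℝ)+1)^p)/(p+1) := by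
          gcongr
        have h7 : (((m:ℝ)+1)^(p+1) - (p+1)*((m:ℝ)+1)^p)/(p+1) =
            ((m:ℝ)+1)^(p+1)/(p+1) - ((m:ℝ)+1)^p := by
          field_simp
        push_cast
        linarith [ih]
    calc ∑ k ∈ Finset.range n, ((k:ℝ)+1)^p ≤ (n:ℝ)^(p+1)/(p+1) := key n
      _ ≤ ((n:ℝ)+1)^(p+1)/(p+1) :=
          (div_le_div_iff_of_pos_right hq).mpr
            (Real.rpow_le_rpow (Nat.cast_nonneg n) (by linarith) hq.le)

/-- if `c_β σ − 2ν + 1 > 0` and `1 ≤ τ ≤ t`, then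
`Σ_{k=τ}^{t} β_{k,t} (Σ_{l=k−τ}^{k−1} β_l)
  ≤ (2^{c_β σ} c_β² τ (τ+1)^ν / (c_β σ − 2ν + 1)) (t+2)^{1−2ν}`. -/
theorem sum_betaKT_mul_sum_beta_le (cβ σ ν : ℝ) (hcβ : 0 < cβ) (hσ : 0 < σ) (hσ1 : σ ≤ 1)
    (hν : 0 < ν) (hν1 : ν ≤ 1) (t : ℕ)
    (hsmall : ∀ l : ℕ, l ≤ t → betaStep cβ ν l * σ ≤ 1)
    (hpos : 0 < cβ * σ - 2 * ν + 1)
    (τ : ℕ) (hτ : 1 ≤ τ) (hτt : τ ≤ t) :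
    ∑ k ∈ Finset.Icc τ t, betaKT cβ σ ν k t * ∑ l ∈ Finset.Icc (k - τ) (k - 1), betaStep cβ ν l
      ≤ (2 : ℝ) ^ (cβ * σ) * cβ ^ 2 * (τ : ℝ) * ((τ : ℝ) + 1) ^ ν / (cβ * σ - 2 * ν + 1)
          * ((t : ℝ) + 2) ^ (1 - 2 * ν) := by
  set a := cβ * σ with ha_def
  have ha : 0 < a := mul_pos hcβ hσ
  have hq : 0 < a - 2*ν + 1 := hpos
  have ht2 : (0:ℝ) < (t:ℝ)+2 := by positivity
  have key : ∀ k ∈ Finset.Icc τ t,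
      betaKT cβ σ ν k t * ∑ l ∈ Finset.Icc (k - τ) (k - 1), betaStep cβ ν l
        ≤ ((τ:ℝ) * cβ^2 * ((τ:ℝ)+1)^ν * 2^a * ((t:ℝ)+2)^(-a)) * ((k:ℝ)+1)^(a-2*ν) := by
    intro k hk
    obtain ⟨hk1, hk2⟩ := Finset.mem_Icc.mp hk
    have hk1' : (τ:ℝ) ≤ (k:ℝ) := Nat.cast_le.mpr hk1
    have hkx : (0:ℝ) < (k:ℝ)+1 := by positivity
    have h_prod : ∏ l ∈ Finset.Icc (k+1) t, (1 - betaStep cβ ν l * σ)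
        ≤ (((k:ℝ)+2)/((t:ℝ)+2))^a := by
      have step1 : ∀ l ∈ Finset.Icc (k+1) t,
          (1 - betaStep cβ ν l * σ) ≤ (((l:ℝ)+1)/((l:ℝ)+2))^a := by
        intro l hl
        apply factor_le_s5 ha
        have hl1 : (0:ℝ) < (l:ℝ)+1 := by positivity
        have hpow : ((l:ℝ)+1)^ν ≤ (l:ℝ)+1 := by
          have h := Real.rpow_le_rpow_of_exponent_le (by linarith : (1:ℝ) ≤ (l:ℝ)+1) hν1
          rwa [Real.rpow_one] at h
        have hpow0 : (0:ℝ) < ((l:ℝ)+1)^ν := Real.rpow_pos_of_pos hl1 ν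
        unfold betaStep
        rw [div_mul_eq_mul_div, ← ha_def]
        gcongr
      calc ∏ l ∈ Finset.Icc (k+1) t, (1 - betaStep cβ ν l * σ)
          ≤ ∏ l ∈ Finset.Icc (k+1) t, (((l:ℝ)+1)/((l:ℝ)+2))^a :=
            Finset.prod_le_prod (fun l hl => by
              have := hsmall l (Finset.mem_Icc.mp hl).2
              linarith) step1
        _ = (∏ l ∈ Finset.Icc (k+1) t, (((l:ℝ)+1)/((l:ℝ)+2)))^a :=
            Real.finset_prod_rpow _ _ (fun l _ => by positivity) a
        _ = (((k:ℝ)+2)/((t:ℝ)+2))^a := by rw [prod_ratio k t hk2]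
    have h_inner : ∑ l ∈ Finset.Icc (k - τ) (k - 1), betaStep cβ ν l
        ≤ (τ:ℝ) * (cβ * ((τ:ℝ)+1)^ν / ((k:ℝ)+1)^ν) := by
      have hcard : (Finset.Icc (k-τ) (k-1)).card = τ := by
        rw [Nat.card_Icc]; omega
      have hb : ∀ l ∈ Finset.Icc (k-τ) (k-1),
          betaStep cβ ν l ≤ cβ * ((τ:ℝ)+1)^ν / ((k:ℝ)+1)^ν := by
        intro l hl
        obtain ⟨hl1, _⟩ := Finset.mem_Icc.mp hl
        have hlk : (k:ℝ) - (τ:ℝ) ≤ (l:ℝ) := by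
          have h := (Nat.cast_le (α := ℝ)).mpr hl1
          rw [Nat.cast_sub hk1] at h
          linarith
        have hmul : (k:ℝ)+1 ≤ ((τ:ℝ)+1) * ((l:ℝ)+1) := by
          have h1 : (τ:ℝ) * ((k:ℝ)-(τ:ℝ)) ≤ (τ:ℝ) * (l:ℝ) :=
            mul_le_mul_of_nonneg_left hlk (Nat.cast_nonneg τ)
          have h2 : (0:ℝ) ≤ (τ:ℝ) * ((k:ℝ)-(τ:ℝ)) :=
            mul_nonneg (Nat.cast_nonneg τ) (by linarith)
          nlinarith
        have hpowm : ((k:ℝ)+1)^ν ≤ ((τ:ℝ)+1)^ν * ((l:ℝ)+1)^ν := by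
          rw [← Real.mul_rpow (by positivity) (by positivity)]
          exact Real.rpow_le_rpow (by positivity) hmul hν.le
        unfold betaStep
        rw [div_le_div_iff₀ (by positivity) (by positivity)]
        calc cβ * ((k:ℝ)+1)^ν ≤ cβ * (((τ:ℝ)+1)^ν * ((l:ℝ)+1)^ν) :=
              mul_le_mul_of_nonneg_left hpowm hcβ.le
          _ = cβ * ((τ:ℝ)+1)^ν * ((l:ℝ)+1)^ν := by ring
      calc ∑ l ∈ Finset.Icc (k-τ) (k-1), betaStep cβ ν l
          ≤ (Finset.Icc (k-τ) (k-1)).card • (cβ * ((τ:ℝ)+1)^ν / ((k:ℝ)+1)^ν) :=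
            Finset.sum_le_card_nsmul _ _ _ hb
        _ = (τ:ℝ) * (cβ * ((τ:ℝ)+1)^ν / ((k:ℝ)+1)^ν) := by
            rw [hcard, nsmul_eq_mul]
    have hβk : betaKT cβ σ ν k t ≤ cβ/((k:ℝ)+1)^ν * (((k:ℝ)+2)/((t:ℝ)+2))^a := by
      unfold betaKT betaStep
      exact mul_le_mul_of_nonneg_left h_prod (by positivity)
    have h_innernn : 0 ≤ ∑ l ∈ Finset.Icc (k - τ) (k - 1), betaStep cβ ν l :=
      Finset.sum_nonneg (fun l _ => by unfold betaStep; positivity)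
    have hB1nn : 0 ≤ cβ/((k:ℝ)+1)^ν * (((k:ℝ)+2)/((t:ℝ)+2))^a := by positivity
    have step2 := mul_le_mul hβk h_inner h_innernn hB1nn
    have h2k : ((k:ℝ)+2)^a ≤ 2^a * ((k:ℝ)+1)^a := by
      have h := Real.rpow_le_rpow (by positivity : (0:ℝ) ≤ (k:ℝ)+2)
        (by linarith : (k:ℝ)+2 ≤ 2*((k:ℝ)+1)) ha.le
      rwa [Real.mul_rpow (by norm_num) (by positivity)] at h
    have e1 : (((k:ℝ)+2)/((t:ℝ)+2))^a = ((k:ℝ)+2)^a * ((t:ℝ)+2)^(-a) := by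
      rw [Real.div_rpow (by positivity) ht2.le, Real.rpow_neg ht2.le, div_eq_mul_inv]
    have e2 : ((k:ℝ)+1)^(a-2*ν) = ((k:ℝ)+1)^a * (((k:ℝ)+1)^ν)⁻¹ * (((k:ℝ)+1)^ν)⁻¹ := by
      rw [show a-2*ν = a + -ν + -ν from by ring, Real.rpow_add hkx, Real.rpow_add hkx,
        Real.rpow_neg hkx.le]
    calc betaKT cβ σ ν k t * ∑ l ∈ Finset.Icc (k - τ) (k - 1), betaStep cβ ν l
        ≤ cβ/((k:ℝ)+1)^ν * (((k:ℝ)+2)/((t:ℝ)+2))^a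
            * ((τ:ℝ) * (cβ * ((τ:ℝ)+1)^ν / ((k:ℝ)+1)^ν)) := step2
      _ = ((τ:ℝ)*cβ^2*((τ:ℝ)+1)^ν*((t:ℝ)+2)^(-a))
            * (((k:ℝ)+2)^a * (((k:ℝ)+1)^ν)⁻¹ * (((k:ℝ)+1)^ν)⁻¹) := by
          rw [e1, div_eq_mul_inv, div_eq_mul_inv]; ring
      _ ≤ ((τ:ℝ)*cβ^2*((τ:ℝ)+1)^ν*((t:ℝ)+2)^(-a))
            * (2^a*((k:ℝ)+1)^a * (((k:ℝ)+1)^ν)⁻¹ * (((k:ℝ)+1)^ν)⁻¹) := by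
          apply mul_le_mul_of_nonneg_left ?_ (by positivity)
          have hi : (0:ℝ) ≤ (((k:ℝ)+1)^ν)⁻¹ := by positivity
          exact mul_le_mul_of_nonneg_right (mul_le_mul_of_nonneg_right h2k hi) hi
      _ = ((τ:ℝ) * cβ^2 * ((τ:ℝ)+1)^ν * 2^a * ((t:ℝ)+2)^(-a)) * ((k:ℝ)+1)^(a-2*ν) := by
          rw [e2]; ring
  have e3 : ((t:ℝ)+2)^(-a) * ((t:ℝ)+2)^(a-2*ν+1) = ((t:ℝ)+2)^(1-2*ν) := by
    rw [← Real.rpow_add ht2]; congr 1; ring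
  calc ∑ k ∈ Finset.Icc τ t, betaKT cβ σ ν k t * ∑ l ∈ Finset.Icc (k - τ) (k - 1), betaStep cβ ν l
      ≤ ∑ k ∈ Finset.Icc τ t,
          ((τ:ℝ) * cβ^2 * ((τ:ℝ)+1)^ν * 2^a * ((t:ℝ)+2)^(-a)) * ((k:ℝ)+1)^(a-2*ν) :=
        Finset.sum_le_sum key
    _ = ((τ:ℝ) * cβ^2 * ((τ:ℝ)+1)^ν * 2^a * ((t:ℝ)+2)^(-a))
          * ∑ k ∈ Finset.Icc τ t, ((k:ℝ)+1)^(a-2*ν) := by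
        rw [← Finset.mul_sum]
    _ ≤ ((τ:ℝ) * cβ^2 * ((τ:ℝ)+1)^ν * 2^a * ((t:ℝ)+2)^(-a))
          * ∑ k ∈ Finset.range (t+1), ((k:ℝ)+1)^(a-2*ν) := by
        apply mul_le_mul_of_nonneg_left ?_ (by positivity)
        apply Finset.sum_le_sum_of_subset_of_nonneg
        · intro x hx
          simp only [Finset.mem_Icc, Finset.mem_range] at *
          omega
        · intro i _ _
          positivity
    _ ≤ ((τ:ℝ) * cβ^2 * ((τ:ℝ)+1)^ν * 2^a * ((t:ℝ)+2)^(-a))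
          * (((t:ℝ)+2)^(a-2*ν+1)/(a-2*ν+1)) := by
        apply mul_le_mul_of_nonneg_left ?_ (by positivity)
        have h := sum_rpow_le (p := a-2*ν) (by linarith) (t+1)
        push_cast at h
        rw [show ((t:ℝ)+1+1) = (t:ℝ)+2 from by ring] at h
        exact h
    _ = (2 : ℝ) ^ a * cβ ^ 2 * (τ : ℝ) * ((τ : ℝ) + 1) ^ ν / (a - 2 * ν + 1)
          * ((t : ℝ) + 2) ^ (1 - 2 * ν) := by
        rw [← e3]; ring
end

section
/- Let in addition c_μ > 0 and ζ > 1 be reals with c_β σ > ν + ζ − 1, set c_{μ,l} := c_μ/(l+1)^ζ for integers l ≥ 0, and let τ ≥ 1 be an integer with τ ≤ t. Then Σ_{k=τ}^{t} β_{k,t} · (Σ_{l=k−τ}^{k−1} c_{μ,l}) ≤ (2^{c_β σ} c_β c_μ τ (τ+1)^ζ / (c_β σ − ν − ζ + 1)) · (t+2)^{1−ν−ζ}. -/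
open Finset Real

/-- The mean-field step size `c_{μ,l} = c_μ/(l+1)^ζ`. -/
noncomputable def muStep (cμ ζ : ℝ) (l : ℕ) : ℝ := cμ / ((l : ℝ) + 1) ^ ζ

lemma aux_stepA {x p : ℝ} (hx : 1 ≤ x) (hp : 1 ≤ p) :
    p * x ^ (p - 1) ≤ (x + 1) ^ p - x ^ p := by
  have hx0 : (0:ℝ) < x := lt_of_lt_of_le one_pos hx
  have h1 : (-1:ℝ) ≤ 1/x := by
    have : (0:ℝ) ≤ 1/x := by positivity
    linarith
  have hb := one_add_mul_self_le_rpow_one_add h1 hp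
  have h2 := mul_le_mul_of_nonneg_right hb (Real.rpow_nonneg hx0.le p)
  rw [← Real.mul_rpow (by positivity) hx0.le] at h2
  have hxx : (1 + 1/x) * x = x + 1 := by field_simp
  rw [hxx] at h2
  have hxp : x ^ p / x = x ^ (p-1) := by rw [Real.rpow_sub hx0, Real.rpow_one]
  have h3 : (1 + p * (1/x)) * x ^ p = x ^ p + p * (x ^ p / x) := by ring
  rw [h3, hxp] at h2
  linarith

lemma aux_stepB {x p : ℝ} (hx : 1 ≤ x) (hp0 : 0 < p) (hp : p ≤ 1) :
    p * x ^ (p - 1) ≤ x ^ p - (x - 1) ^ p := by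
  have hx0 : (0:ℝ) < x := lt_of_lt_of_le one_pos hx
  have hinv : 1/x ≤ 1 := by rw [div_le_one hx0]; exact hx
  have h1 : (-1:ℝ) ≤ -(1/x) := by linarith
  have hb := rpow_one_add_le_one_add_mul_self h1 hp0.le hp
  have h2 := mul_le_mul_of_nonneg_right hb (Real.rpow_nonneg hx0.le p)
  rw [← Real.mul_rpow (by linarith) hx0.le] at h2
  have hxx : (1 + -(1/x)) * x = x - 1 := by field_simp; ring
  rw [hxx] at h2
  have hxp : x ^ p / x = x ^ (p-1) := by rw [Real.rpow_sub hx0, Real.rpow_one]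
  have h3 : (1 + p * -(1/x)) * x ^ p = x ^ p - p * (x ^ p / x) := by ring
  rw [h3, hxp] at h2
  linarith

lemma aux_sumC {a : ℝ} (ha : -1 < a) (n : ℕ) :
    ∑ k ∈ Finset.range n, ((k:ℝ)+1) ^ a ≤ ((n:ℝ)+1) ^ (a+1) / (a+1) := by
  have hp0 : (0:ℝ) < a + 1 := by linarith
  have hsimp : a + 1 - 1 = a := by ring
  rcases le_or_gt 0 a with hca | hca
  · induction n with
    | zero => simp; positivity
    | succ n ih =>
      rw [Finset.sum_range_succ]
      have hx : (1:ℝ) ≤ (n:ℝ) + 1 := by simp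
      have hkey := aux_stepA (x := (n:ℝ)+1) (p := a+1) hx (by linarith)
      rw [hsimp] at hkey
      have ih' : (∑ k ∈ Finset.range n, ((k:ℝ)+1) ^ a) * (a+1) ≤ ((n:ℝ)+1)^(a+1) := by
        rw [← le_div_iff₀ hp0]; exact ih
      push_cast
      rw [le_div_iff₀ hp0]
      nlinarith [ih', hkey]
  · have aux : ∀ m : ℕ, ∑ k ∈ Finset.range m, ((k:ℝ)+1) ^ a ≤ (m:ℝ) ^ (a+1) / (a+1) := by
      intro m
      induction m with
      | zero => simp [Real.zero_rpow hp0.ne']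
      | succ n ih =>
        rw [Finset.sum_range_succ]
        have hx : (1:ℝ) ≤ (n:ℝ) + 1 := by simp
        have hkey := aux_stepB (x := (n:ℝ)+1) (p := a+1) hx hp0 (by linarith)
        rw [hsimp] at hkey
        have hsub : (n:ℝ) + 1 - 1 = (n:ℝ) := by ring
        rw [hsub] at hkey
        have ih' : (∑ k ∈ Finset.range n, ((k:ℝ)+1) ^ a) * (a+1) ≤ (n:ℝ)^(a+1) := by
          rw [← le_div_iff₀ hp0]; exact ih
        push_cast
        rw [le_div_iff₀ hp0]
        nlinarith [ih', hkey]
    refine le_trans (aux n) ?_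
    have : (n:ℝ) ^ (a+1) ≤ ((n:ℝ)+1) ^ (a+1) :=
      Real.rpow_le_rpow (Nat.cast_nonneg n) (by linarith) hp0.le
    gcongr

lemma aux_prodD (k : ℕ) : ∀ t : ℕ, k ≤ t →
    ∏ l ∈ Finset.Icc (k+1) t, (((l:ℝ)+1)/((l:ℝ)+2)) = ((k:ℝ)+2)/((t:ℝ)+2) := by
  intro t
  induction t with
  | zero =>
    intro h
    interval_cases k
    simp
  | succ n ih =>
    intro h
    rcases Nat.lt_or_ge k (n+1) with h1 | h1
    · have hk : k ≤ n := Nat.lt_succ_iff.mp h1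
      rw [Finset.prod_Icc_succ_top (Nat.succ_le_succ hk), ih hk]
      push_cast
      have h2 : (n:ℝ) + 2 ≠ 0 := by positivity
      have h3 : (n:ℝ) + 1 + 2 ≠ 0 := by positivity
      field_simp
      ring
    · have : k = n + 1 := le_antisymm h h1
      subst this
      rw [Finset.Icc_eq_empty (by omega)]
      rw [Finset.prod_empty]
      rw [div_self (by positivity)]

lemma aux_factorE {c x : ℝ} (hc : 0 < c) (hx : 1 ≤ x) :
    1 - c / x ≤ (x / (x + 1)) ^ c := by
  have hx0 : (0:ℝ) < x := lt_of_lt_of_le one_pos hx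
  have hq : (0:ℝ) < x / (x+1) := by positivity
  rw [Real.rpow_def_of_pos hq]
  have hlog : -(1/x) ≤ Real.log (x / (x+1)) := by
    have h1 : Real.log ((x+1)/x) ≤ (x+1)/x - 1 := Real.log_le_sub_one_of_pos (by positivity)
    have h2 : Real.log (x/(x+1)) = - Real.log ((x+1)/x) := by
      rw [← Real.log_inv]
      congr 1
      field_simp
    have h3 : (x+1)/x - 1 = 1/x := by field_simp; ring
    rw [h2]
    linarith [h1.trans_eq h3]
  have h4 : -(c/x) ≤ c * Real.log (x/(x+1)) := by
    have := mul_le_mul_of_nonneg_left hlog hc.le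
    calc -(c/x) = c * (-(1/x)) := by ring
    _ ≤ c * Real.log (x/(x+1)) := this
  calc 1 - c/x = -(c/x) + 1 := by ring
  _ ≤ Real.exp (-(c/x)) := Real.add_one_le_exp _
  _ ≤ Real.exp (c * Real.log (x/(x+1))) := Real.exp_le_exp.mpr h4
  _ = Real.exp (Real.log (x/(x+1)) * c) := by ring_nf

lemma aux_prodF (cβ σ ν : ℝ) (hcβ : 0 < cβ) (hσ : 0 < σ) (hν1 : ν ≤ 1)
    (t : ℕ) (hsmall : ∀ l : ℕ, l ≤ t → betaStep cβ ν l * σ ≤ 1) (k : ℕ) (hk : k ≤ t) :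
    ∏ l ∈ Finset.Icc (k+1) t, (1 - betaStep cβ ν l * σ) ≤ (((k:ℝ)+2)/((t:ℝ)+2)) ^ (cβ*σ) := by
  have hc : 0 < cβ*σ := mul_pos hcβ hσ
  calc ∏ l ∈ Finset.Icc (k+1) t, (1 - betaStep cβ ν l * σ)
      ≤ ∏ l ∈ Finset.Icc (k+1) t, (((l:ℝ)+1)/((l:ℝ)+2)) ^ (cβ*σ) := by
        apply Finset.prod_le_prod
        · intro l hl
          have hlt : l ≤ t := (Finset.mem_Icc.mp hl).2
          linarith [hsmall l hlt]
        · intro l hl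
          have hx : (1:ℝ) ≤ (l:ℝ)+1 := by simp
          have hpow : ((l:ℝ)+1)^ν ≤ (l:ℝ)+1 := by
            calc ((l:ℝ)+1)^ν ≤ ((l:ℝ)+1)^(1:ℝ) := Real.rpow_le_rpow_of_exponent_le hx hν1
            _ = (l:ℝ)+1 := Real.rpow_one _
          have h1 : cβ/((l:ℝ)+1) ≤ betaStep cβ ν l := by
            unfold betaStep
            gcongr
          have h2 : 1 - betaStep cβ ν l * σ ≤ 1 - (cβ*σ)/((l:ℝ)+1) := by
            have h3 := mul_le_mul_of_nonneg_right h1 hσ.le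
            have h4 : cβ/((l:ℝ)+1)*σ = cβ*σ/((l:ℝ)+1) := by ring
            rw [h4] at h3
            linarith
          refine h2.trans ?_
          have h5 := aux_factorE (c := cβ*σ) (x := (l:ℝ)+1) hc hx
          have h6 : (l:ℝ)+1+1 = (l:ℝ)+2 := by ring
          rw [h6] at h5
          exact h5
  _ = (∏ l ∈ Finset.Icc (k+1) t, (((l:ℝ)+1)/((l:ℝ)+2))) ^ (cβ*σ) :=
        Real.finset_prod_rpow _ _ (fun l _ => by positivity) _
  _ = (((k:ℝ)+2)/((t:ℝ)+2)) ^ (cβ*σ) := by rw [aux_prodD k t hk]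

lemma aux_termG (cβ σ ν : ℝ) (hcβ : 0 < cβ) (hσ : 0 < σ) (hν1 : ν ≤ 1)
    (t : ℕ) (hsmall : ∀ l : ℕ, l ≤ t → betaStep cβ ν l * σ ≤ 1)
    (cμ ζ : ℝ) (hcμ : 0 < cμ) (hζ : 1 < ζ)
    (τ : ℕ) (hτ : 1 ≤ τ) (k : ℕ) (hk : τ ≤ k) (hkt : k ≤ t) :
    betaKT cβ σ ν k t * ∑ l ∈ Finset.Icc (k - τ) (k - 1), muStep cμ ζ l
      ≤ (2:ℝ)^(cβ*σ) * cβ * cμ * τ * ((τ:ℝ)+1)^ζ * ((t:ℝ)+2)^(-(cβ*σ))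
          * ((k:ℝ)+1)^(cβ*σ - ν - ζ) := by
  have hc : 0 < cβ*σ := mul_pos hcβ hσ
  have hζ0 : (0:ℝ) ≤ ζ := by linarith
  have hK1 : (0:ℝ) < (k:ℝ)+1 := by positivity
  have hT2 : (0:ℝ) < (t:ℝ)+2 := by positivity
  have hτk : ((k:ℕ) - τ : ℕ) = k - τ := rfl
  have hcastsub : (((k - τ : ℕ)):ℝ) = (k:ℝ) - (τ:ℝ) := by
    rw [Nat.cast_sub hk]
  have hτR : (1:ℝ) ≤ (τ:ℝ) := by exact_mod_cast hτ
  have hkR : (τ:ℝ) ≤ (k:ℝ) := by exact_mod_cast hk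
  -- inner sum bound
  have hinner : ∑ l ∈ Finset.Icc (k - τ) (k - 1), muStep cμ ζ l
      ≤ (τ:ℝ) * (cμ * ((τ:ℝ)+1)^ζ / ((k:ℝ)+1)^ζ) := by
    have hcard : (Finset.Icc (k - τ) (k - 1)).card = τ := by
      rw [Nat.card_Icc]; omega
    have hb : ∀ l ∈ Finset.Icc (k - τ) (k - 1),
        muStep cμ ζ l ≤ cμ * ((τ:ℝ)+1)^ζ / ((k:ℝ)+1)^ζ := by
      intro l hl
      have hl1 : k - τ ≤ l := (Finset.mem_Icc.mp hl).1
      have hlR : (k:ℝ) - (τ:ℝ) ≤ (l:ℝ) := by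
        rw [← hcastsub]; exact_mod_cast hl1
      have hmul : (k:ℝ)+1 ≤ ((τ:ℝ)+1) * ((l:ℝ)+1) := by nlinarith
      have hpow : ((k:ℝ)+1)^ζ ≤ ((τ:ℝ)+1)^ζ * ((l:ℝ)+1)^ζ := by
        rw [← Real.mul_rpow (by positivity) (by positivity)]
        exact Real.rpow_le_rpow hK1.le hmul hζ0
      unfold muStep
      rw [div_le_div_iff₀ (by positivity) (by positivity)]
      have hL1 : (0:ℝ) < ((l:ℝ)+1)^ζ := by positivity
      nlinarith [hpow, hL1]
    calc ∑ l ∈ Finset.Icc (k - τ) (k - 1), muStep cμ ζ l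
        ≤ (Finset.Icc (k - τ) (k - 1)).card • (cμ * ((τ:ℝ)+1)^ζ / ((k:ℝ)+1)^ζ) :=
          Finset.sum_le_card_nsmul _ _ _ hb
    _ = (τ:ℝ) * (cμ * ((τ:ℝ)+1)^ζ / ((k:ℝ)+1)^ζ) := by
          rw [hcard, nsmul_eq_mul]
  have hinner0 : (0:ℝ) ≤ ∑ l ∈ Finset.Icc (k - τ) (k - 1), muStep cμ ζ l := by
    apply Finset.sum_nonneg
    intro l _
    unfold muStep
    positivity
  -- betaKT bound
  have hβ0 : (0:ℝ) ≤ betaStep cβ ν k := by unfold betaStep; positivity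
  have hbeta : betaKT cβ σ ν k t
      ≤ cβ/((k:ℝ)+1)^ν * (((k:ℝ)+2)/((t:ℝ)+2)) ^ (cβ*σ) := by
    unfold betaKT
    have := aux_prodF cβ σ ν hcβ hσ hν1 t hsmall k hkt
    calc betaStep cβ ν k * ∏ l ∈ Finset.Icc (k + 1) t, (1 - betaStep cβ ν l * σ)
        ≤ betaStep cβ ν k * (((k:ℝ)+2)/((t:ℝ)+2)) ^ (cβ*σ) :=
          mul_le_mul_of_nonneg_left this hβ0
    _ = cβ/((k:ℝ)+1)^ν * (((k:ℝ)+2)/((t:ℝ)+2)) ^ (cβ*σ) := by unfold betaStep; rfl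
  have hbetaKT0 : (0:ℝ) ≤ betaKT cβ σ ν k t := by
    unfold betaKT
    apply mul_nonneg hβ0
    apply Finset.prod_nonneg
    intro l hl
    have hlt : l ≤ t := (Finset.mem_Icc.mp hl).2
    linarith [hsmall l hlt]
  -- combine
  have hcomb : betaKT cβ σ ν k t * ∑ l ∈ Finset.Icc (k - τ) (k - 1), muStep cμ ζ l
      ≤ (cβ/((k:ℝ)+1)^ν * (((k:ℝ)+2)/((t:ℝ)+2)) ^ (cβ*σ))
          * ((τ:ℝ) * (cμ * ((τ:ℝ)+1)^ζ / ((k:ℝ)+1)^ζ)) := by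
    apply mul_le_mul hbeta hinner hinner0 (by positivity)
  refine hcomb.trans ?_
  -- algebra
  have hdiv : (((k:ℝ)+2)/((t:ℝ)+2)) ^ (cβ*σ) = ((k:ℝ)+2)^(cβ*σ) / ((t:ℝ)+2)^(cβ*σ) := by
    rw [Real.div_rpow (by positivity) hT2.le]
  have hneg : ((t:ℝ)+2)^(-(cβ*σ)) = (((t:ℝ)+2)^(cβ*σ))⁻¹ := Real.rpow_neg hT2.le _
  have hsplit : ((k:ℝ)+1)^(cβ*σ - ν - ζ)
      = ((k:ℝ)+1)^(cβ*σ) / (((k:ℝ)+1)^ν * ((k:ℝ)+1)^ζ) := by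
    rw [eq_div_iff (by positivity), ← Real.rpow_add hK1, ← Real.rpow_add hK1]
    ring_nf
  have hkey : ((k:ℝ)+2)^(cβ*σ) ≤ (2:ℝ)^(cβ*σ) * ((k:ℝ)+1)^(cβ*σ) := by
    rw [← Real.mul_rpow (by norm_num) hK1.le]
    exact Real.rpow_le_rpow (by positivity) (by linarith) hc.le
  rw [hdiv, hneg, hsplit]
  have hPν : (0:ℝ) < ((k:ℝ)+1)^ν := by positivity
  have hPζ : (0:ℝ) < ((k:ℝ)+1)^ζ := by positivity
  have hQc : (0:ℝ) < ((t:ℝ)+2)^(cβ*σ) := by positivity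
  calc cβ/((k:ℝ)+1)^ν * (((k:ℝ)+2)^(cβ*σ) / ((t:ℝ)+2)^(cβ*σ))
        * ((τ:ℝ) * (cμ * ((τ:ℝ)+1)^ζ / ((k:ℝ)+1)^ζ))
      = (cβ * cμ * (τ:ℝ) * ((τ:ℝ)+1)^ζ
          * ((((k:ℝ)+1)^ν)⁻¹ * (((k:ℝ)+1)^ζ)⁻¹ * ((((t:ℝ)+2)^(cβ*σ))⁻¹)))
          * ((k:ℝ)+2)^(cβ*σ) := by
        field_simp
  _ ≤ (cβ * cμ * (τ:ℝ) * ((τ:ℝ)+1)^ζ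
          * ((((k:ℝ)+1)^ν)⁻¹ * (((k:ℝ)+1)^ζ)⁻¹ * ((((t:ℝ)+2)^(cβ*σ))⁻¹)))
          * ((2:ℝ)^(cβ*σ) * ((k:ℝ)+1)^(cβ*σ)) := by
        apply mul_le_mul_of_nonneg_left hkey
        positivity
  _ = (2:ℝ)^(cβ*σ) * cβ * cμ * (τ:ℝ) * ((τ:ℝ)+1)^ζ * (((t:ℝ)+2)^(cβ*σ))⁻¹
          * (((k:ℝ)+1)^(cβ*σ) / (((k:ℝ)+1)^ν * ((k:ℝ)+1)^ζ)) := by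
        field_simp

/-- if `c_μ > 0`, `ζ > 1`, `c_β σ > ν + ζ − 1` and `1 ≤ τ ≤ t`, then
`Σ_{k=τ}^{t} β_{k,t} (Σ_{l=k−τ}^{k−1} c_{μ,l})
  ≤ (2^{c_β σ} c_β c_μ τ (τ+1)^ζ / (c_β σ − ν − ζ + 1)) (t+2)^{1−ν−ζ}`. -/
theorem sum_betaKT_mul_sum_muStep_le (cβ σ ν : ℝ) (hcβ : 0 < cβ) (hσ : 0 < σ) (hσ1 : σ ≤ 1)
    (hν : 0 < ν) (hν1 : ν ≤ 1) (t : ℕ)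
    (hsmall : ∀ l : ℕ, l ≤ t → betaStep cβ ν l * σ ≤ 1)
    (cμ ζ : ℝ) (hcμ : 0 < cμ) (hζ : 1 < ζ)
    (hgap : ν + ζ - 1 < cβ * σ)
    (τ : ℕ) (hτ : 1 ≤ τ) (hτt : τ ≤ t) :
    ∑ k ∈ Finset.Icc τ t, betaKT cβ σ ν k t * ∑ l ∈ Finset.Icc (k - τ) (k - 1), muStep cμ ζ l
      ≤ (2 : ℝ) ^ (cβ * σ) * cβ * cμ * (τ : ℝ) * ((τ : ℝ) + 1) ^ ζ / (cβ * σ - ν - ζ + 1)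
          * ((t : ℝ) + 2) ^ (1 - ν - ζ) := by
  have hc : 0 < cβ*σ := mul_pos hcβ hσ
  set a : ℝ := cβ*σ - ν - ζ with ha_def
  have ha : -1 < a := by simp only [ha_def]; linarith
  have hp0 : (0:ℝ) < a + 1 := by linarith
  have hT2 : (0:ℝ) < (t:ℝ)+2 := by positivity
  set D : ℝ := (2:ℝ)^(cβ*σ) * cβ * cμ * (τ:ℝ) * ((τ:ℝ)+1)^ζ * ((t:ℝ)+2)^(-(cβ*σ)) with hD_def
  have hD0 : 0 ≤ D := by
    simp only [hD_def]
    have hτ0 : (0:ℝ) ≤ (τ:ℝ) := Nat.cast_nonneg τ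
    positivity
  calc ∑ k ∈ Finset.Icc τ t, betaKT cβ σ ν k t * ∑ l ∈ Finset.Icc (k - τ) (k - 1), muStep cμ ζ l
      ≤ ∑ k ∈ Finset.Icc τ t, D * ((k:ℝ)+1)^a := by
        apply Finset.sum_le_sum
        intro k hk
        obtain ⟨hk1, hk2⟩ := Finset.mem_Icc.mp hk
        have := aux_termG cβ σ ν hcβ hσ hν1 t hsmall cμ ζ hcμ hζ τ hτ k hk1 hk2
        calc betaKT cβ σ ν k t * ∑ l ∈ Finset.Icc (k - τ) (k - 1), muStep cμ ζ l
            ≤ (2:ℝ)^(cβ*σ) * cβ * cμ * τ * ((τ:ℝ)+1)^ζ * ((t:ℝ)+2)^(-(cβ*σ))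
                * ((k:ℝ)+1)^(cβ*σ - ν - ζ) := this
        _ = D * ((k:ℝ)+1)^a := by rw [hD_def]
  _ = D * ∑ k ∈ Finset.Icc τ t, ((k:ℝ)+1)^a := by rw [Finset.mul_sum]
  _ ≤ D * ∑ k ∈ Finset.range (t+1), ((k:ℝ)+1)^a := by
        apply mul_le_mul_of_nonneg_left _ hD0
        apply Finset.sum_le_sum_of_subset_of_nonneg
        · intro k hk
          obtain ⟨_, hk2⟩ := Finset.mem_Icc.mp hk
          exact Finset.mem_range.mpr (Nat.lt_succ_of_le hk2)
        · intro k _ _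
          positivity
  _ ≤ D * (((t:ℝ)+2)^(a+1)/(a+1)) := by
        apply mul_le_mul_of_nonneg_left _ hD0
        have := aux_sumC ha (t+1)
        push_cast at this
        have h2 : (t:ℝ) + 1 + 1 = (t:ℝ) + 2 := by ring
        rw [h2] at this
        exact this
  _ = (2 : ℝ) ^ (cβ * σ) * cβ * cμ * (τ : ℝ) * ((τ : ℝ) + 1) ^ ζ / (cβ * σ - ν - ζ + 1)
          * ((t : ℝ) + 2) ^ (1 - ν - ζ) := by
        have hpow : ((t:ℝ)+2)^(-(cβ*σ)) * ((t:ℝ)+2)^(a+1) = ((t:ℝ)+2)^(1-ν-ζ) := by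
          rw [← Real.rpow_add hT2]
          congr 1
          simp only [ha_def]
          ring
        rw [hD_def]
        rw [show (2:ℝ)^(cβ*σ) * cβ * cμ * (τ:ℝ) * ((τ:ℝ)+1)^ζ * ((t:ℝ)+2)^(-(cβ*σ))
            * (((t:ℝ)+2)^(a+1)/(a+1))
            = (2:ℝ)^(cβ*σ) * cβ * cμ * (τ:ℝ) * ((τ:ℝ)+1)^ζ / (a+1)
              * (((t:ℝ)+2)^(-(cβ*σ)) * ((t:ℝ)+2)^(a+1)) by ring]
        rw [hpow]
end

section
/- Let in addition c_μ > 0 and ζ > 1 be reals, set c_{μ,l} := c_μ/(l+1)^ζ for integers l ≥ 0, and let 1 ≤ τ ≤ t be integers. Then β̃_{τ−1,t} · (Σ_{l=τ}^{t} c_{μ,l}) + Σ_{k=τ}^{t} β_{k,t} · (Σ_{l=k}^{t} c_{μ,l}) ≤ c_μ / (σ (ζ−1) τ^{ζ−1}). -/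
open Finset Real

/-- `β̃_{k,t} = ∏_{l=k+1}^{t} (1 − β_l σ)`; in particular
`β̃_{τ−1,t} = ∏_{l=τ}^{t} (1 − β_l σ)`. -/
noncomputable def betaTildeKT (cβ σ ν : ℝ) (k t : ℕ) : ℝ :=
  ∏ l ∈ Finset.Icc (k + 1) t, (1 - betaStep cβ ν l * σ)

/-- Bernoulli-type: `(1-u)^q * (1+q*u) ≤ 1` for `0 ≤ u ≤ 1`, `0 ≤ q`. -/
lemma aux_bernoulli (u q : ℝ) (hu0 : 0 ≤ u) (hu1 : u ≤ 1) (hq : 0 ≤ q) :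
    (1 - u) ^ q * (1 + q * u) ≤ 1 := by
  have h1 : (1 - u : ℝ) ≤ Real.exp (-u) := by
    have := Real.add_one_le_exp (-u); linarith
  have h2 : (1 - u) ^ q ≤ Real.exp (-u) ^ q :=
    Real.rpow_le_rpow (by linarith) h1 hq
  have h3 : Real.exp (-u) ^ q = Real.exp (-(u * q)) := by
    rw [← Real.exp_mul]; ring_nf
  have h4 : (1 + q * u) ≤ Real.exp (u * q) := by
    have := Real.add_one_le_exp (u * q); linarith
  calc (1 - u) ^ q * (1 + q * u)
      ≤ Real.exp (-(u * q)) * Real.exp (u * q) := by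
        apply mul_le_mul (h3 ▸ h2) h4 (by positivity)
          (le_of_lt (Real.exp_pos _))
    _ = 1 := by rw [← Real.exp_add]; simp

/-- Key step inequality: `1/(x+1)^(q+1) + 1/(q(x+1)^q) ≤ 1/(q x^q)` for `x ≥ 1`, `q > 0`. -/
lemma aux_key (q x : ℝ) (hq : 0 < q) (hx : 1 ≤ x) :
    1 / (x + 1) ^ (q + 1) + 1 / (q * (x + 1) ^ q) ≤ 1 / (q * x ^ q) := by
  have hx0 : (0:ℝ) < x := by linarith
  have hx1 : (0:ℝ) < x + 1 := by linarith
  have hA : (0:ℝ) < x ^ q := Real.rpow_pos_of_pos hx0 q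
  have hB : (0:ℝ) < (x + 1) ^ q := Real.rpow_pos_of_pos hx1 q
  have hBx : (x + 1) ^ (q + 1) = (x + 1) ^ q * (x + 1) := by
    rw [Real.rpow_add hx1, Real.rpow_one]
  -- main inequality: x^q * (x + 1 + q) ≤ (x+1)^q * (x+1)
  have hmain : x ^ q * (x + 1 + q) ≤ (x + 1) ^ q * (x + 1) := by
    have hb := aux_bernoulli (1 / (x + 1)) q (by positivity) (by
      rw [div_le_one hx1]; linarith) hq.le
    have hv : (1 : ℝ) - 1 / (x + 1) = x / (x + 1) := by field_simp; ring
    rw [hv, Real.div_rpow hx0.le hx1.le] at hb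
    have : x ^ q / (x + 1) ^ q * (1 + q * (1 / (x + 1))) * ((x + 1) ^ q * (x + 1))
        ≤ 1 * ((x + 1) ^ q * (x + 1)) := by
      apply mul_le_mul_of_nonneg_right hb (by positivity)
    calc x ^ q * (x + 1 + q)
        = x ^ q / (x + 1) ^ q * (1 + q * (1 / (x + 1))) * ((x + 1) ^ q * (x + 1)) := by
          field_simp
      _ ≤ 1 * ((x + 1) ^ q * (x + 1)) := this
      _ = (x + 1) ^ q * (x + 1) := one_mul _
  rw [hBx, div_add_div _ _ (by positivity) (by positivity), div_le_div_iff₀ (by positivity) (by positivity)]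
  nlinarith [mul_le_mul_of_nonneg_left hmain (mul_pos hq hB).le, hA.le, hB.le, hq.le, hx0.le]

/-- Tail sum bound: `∑_{l=τ}^t 1/(l+1)^ζ ≤ 1/((ζ-1) τ^(ζ-1))`. -/
lemma aux_tail (ζ : ℝ) (hζ : 1 < ζ) :
    ∀ (n τ t : ℕ), 1 ≤ τ → t ≤ τ + n →
    ∑ l ∈ Finset.Icc τ t, 1 / ((l : ℝ) + 1) ^ ζ ≤ 1 / ((ζ - 1) * (τ : ℝ) ^ (ζ - 1)) := by
  have hq : (0:ℝ) < ζ - 1 := by linarith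
  intro n
  induction n with
  | zero =>
    intro τ t hτ ht
    rcases lt_or_ge t τ with h | h
    · rw [Finset.Icc_eq_empty (by omega)]
      simp only [Finset.sum_empty]
      positivity
    · have htτ : t = τ := by omega
      rw [htτ, Finset.Icc_self, Finset.sum_singleton]
      have hx : (1:ℝ) ≤ (τ:ℝ) := by exact_mod_cast hτ
      have hk := aux_key (ζ - 1) (τ:ℝ) hq hx
      rw [show ζ - 1 + 1 = ζ by ring] at hk
      have : (0:ℝ) < 1 / ((ζ - 1) * ((τ:ℝ) + 1) ^ (ζ - 1)) := by positivity
      linarith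
  | succ n ih =>
    intro τ t hτ ht
    rcases lt_or_ge t τ with h | h
    · rw [Finset.Icc_eq_empty (by omega)]
      simp only [Finset.sum_empty]
      positivity
    · have hsplit : Finset.Icc τ t = insert τ (Finset.Icc (τ + 1) t) := by
        rw [Finset.Icc_add_one_left_eq_Ioc, Finset.Ioc_insert_left h]
      rw [hsplit, Finset.sum_insert (by simp)]
      have hrec := ih (τ + 1) t (by omega) (by omega)
      have hx : (1:ℝ) ≤ (τ:ℝ) := by exact_mod_cast hτ
      have hk := aux_key (ζ - 1) (τ:ℝ) hq hx
      rw [show ζ - 1 + 1 = ζ by ring] at hk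
      push_cast at hrec ⊢
      linarith

/-- for `c_μ > 0`, `ζ > 1`, and `1 ≤ τ ≤ t`,
`β̃_{τ−1,t} (Σ_{l=τ}^{t} c_{μ,l}) + Σ_{k=τ}^{t} β_{k,t} (Σ_{l=k}^{t} c_{μ,l})
  ≤ c_μ / (σ (ζ−1) τ^{ζ−1})`. -/
theorem betaTilde_muStep_tail_le (cβ σ ν : ℝ) (hcβ : 0 < cβ) (hσ : 0 < σ) (hσ1 : σ ≤ 1)
    (hν : 0 < ν) (hν1 : ν ≤ 1) (t : ℕ)
    (hsmall : ∀ l : ℕ, l ≤ t → betaStep cβ ν l * σ ≤ 1)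
    (cμ ζ : ℝ) (hcμ : 0 < cμ) (hζ : 1 < ζ)
    (τ : ℕ) (hτ : 1 ≤ τ) (hτt : τ ≤ t) :
    betaTildeKT cβ σ ν (τ - 1) t * (∑ l ∈ Finset.Icc τ t, muStep cμ ζ l)
        + ∑ k ∈ Finset.Icc τ t, betaKT cβ σ ν k t * ∑ l ∈ Finset.Icc k t, muStep cμ ζ l
      ≤ cμ / (σ * (ζ - 1) * (τ : ℝ) ^ (ζ - 1)) := by
  set P : ℕ → ℝ := fun k => ∏ l ∈ Finset.Icc k t, (1 - betaStep cβ ν l * σ) with hPdef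
  have hbpos : ∀ l : ℕ, 0 < betaStep cβ ν l := by
    intro l; unfold betaStep; positivity
  have hfac0 : ∀ l : ℕ, l ≤ t → 0 ≤ 1 - betaStep cβ ν l * σ := by
    intro l hl; linarith [hsmall l hl]
  have hfac1 : ∀ l : ℕ, 1 - betaStep cβ ν l * σ ≤ 1 := by
    intro l; nlinarith [hbpos l]
  have hP0 : ∀ k, 0 ≤ P k := by
    intro k
    apply Finset.prod_nonneg
    intro l hl
    exact hfac0 l (Finset.mem_Icc.mp hl).2
  have hP1 : ∀ k, P k ≤ 1 := by
    intro k
    apply Finset.prod_le_one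
    · intro l hl; exact hfac0 l (Finset.mem_Icc.mp hl).2
    · intro l _; exact hfac1 l
  have hPstep : ∀ k, k ≤ t → P k = (1 - betaStep cβ ν k * σ) * P (k + 1) := by
    intro k hk
    show (∏ l ∈ Finset.Icc k t, (1 - betaStep cβ ν l * σ)) = _
    rw [← Finset.Ioc_insert_left hk, Finset.prod_insert (by simp), ← Finset.Icc_add_one_left_eq_Ioc]
  have hsigma : ∀ k, k ≤ t → σ * betaKT cβ σ ν k t = P (k + 1) - P k := by
    intro k hk
    rw [hPstep k hk]
    show σ * (betaStep cβ ν k * P (k + 1)) = _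
    ring
  -- telescoping
  have htel : ∀ l, τ ≤ l → l ≤ t →
      ∑ k ∈ Finset.Icc τ l, σ * betaKT cβ σ ν k t = P (l + 1) - P τ := by
    intro l hl
    induction l, hl using Nat.le_induction with
    | base =>
      intro hlt
      rw [Finset.Icc_self, Finset.sum_singleton, hsigma τ hlt]
    | succ l hl ih =>
      intro hlt
      rw [Finset.sum_Icc_succ_top (by omega), ih (by omega), hsigma (l + 1) hlt]
      ring
  -- sum swap
  have hswap : ∑ k ∈ Finset.Icc τ t, σ * betaKT cβ σ ν k t * ∑ l ∈ Finset.Icc k t, muStep cμ ζ l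
      = ∑ l ∈ Finset.Icc τ t, (∑ k ∈ Finset.Icc τ l, σ * betaKT cβ σ ν k t) * muStep cμ ζ l := by
    simp_rw [Finset.mul_sum, Finset.sum_mul]
    exact Finset.sum_comm' (by intro k l; simp only [Finset.mem_Icc]; omega)
  have hmu0 : ∀ l : ℕ, 0 ≤ muStep cμ ζ l := by
    intro l; unfold muStep; positivity
  have hPtau : betaTildeKT cβ σ ν (τ - 1) t = P τ := by
    unfold betaTildeKT
    rw [Nat.sub_add_cancel hτ]
  -- main bound after multiplying by σ
  have hmain : σ * (betaTildeKT cβ σ ν (τ - 1) t * (∑ l ∈ Finset.Icc τ t, muStep cμ ζ l)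
        + ∑ k ∈ Finset.Icc τ t, betaKT cβ σ ν k t * ∑ l ∈ Finset.Icc k t, muStep cμ ζ l)
      ≤ ∑ l ∈ Finset.Icc τ t, muStep cμ ζ l := by
    rw [hPtau]
    have e2 : σ * (P τ * (∑ l ∈ Finset.Icc τ t, muStep cμ ζ l)
          + ∑ k ∈ Finset.Icc τ t, betaKT cβ σ ν k t * ∑ l ∈ Finset.Icc k t, muStep cμ ζ l)
        = (∑ l ∈ Finset.Icc τ t, P τ * (σ * muStep cμ ζ l))
          + ∑ k ∈ Finset.Icc τ t, σ * betaKT cβ σ ν k t * ∑ l ∈ Finset.Icc k t, muStep cμ ζ l := by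
      rw [mul_add]
      congr 1
      · rw [Finset.mul_sum, Finset.mul_sum]
        apply Finset.sum_congr rfl; intro l _; ring
      · rw [Finset.mul_sum]
        apply Finset.sum_congr rfl; intro k _; ring
    rw [e2, hswap, ← Finset.sum_add_distrib]
    apply Finset.sum_le_sum
    intro l hl
    obtain ⟨hl1, hl2⟩ := Finset.mem_Icc.mp hl
    rw [htel l hl1 hl2]
    have h1 : P τ * (σ * muStep cμ ζ l) + (P (l + 1) - P τ) * muStep cμ ζ l
        = (P (l + 1) - (1 - σ) * P τ) * muStep cμ ζ l := by ring
    rw [h1]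
    have h2 : P (l + 1) - (1 - σ) * P τ ≤ 1 := by
      have := hP0 τ
      have := hP1 (l + 1)
      nlinarith
    nlinarith [hmu0 l, mul_le_mul_of_nonneg_right h2 (hmu0 l)]
  -- tail bound
  have htail : ∑ l ∈ Finset.Icc τ t, muStep cμ ζ l ≤ cμ * (1 / ((ζ - 1) * (τ : ℝ) ^ (ζ - 1))) := by
    have h := aux_tail ζ hζ t τ t hτ (by omega)
    calc ∑ l ∈ Finset.Icc τ t, muStep cμ ζ l
        = cμ * ∑ l ∈ Finset.Icc τ t, 1 / ((l : ℝ) + 1) ^ ζ := by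
          rw [Finset.mul_sum]; apply Finset.sum_congr rfl
          intro l _; unfold muStep; rw [mul_one_div]
      _ ≤ cμ * (1 / ((ζ - 1) * (τ : ℝ) ^ (ζ - 1))) := by
          apply mul_le_mul_of_nonneg_left h hcμ.le
  have hτpos : (0:ℝ) < (τ : ℝ) ^ (ζ - 1) := by
    have : (0:ℝ) < (τ:ℝ) := by positivity
    positivity
  have hq : (0:ℝ) < ζ - 1 := by linarith
  rw [show σ * (ζ - 1) * (τ : ℝ) ^ (ζ - 1) = ((ζ - 1) * (τ : ℝ) ^ (ζ - 1)) * σ by ring,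
    ← div_div, le_div_iff₀ hσ, mul_comm]
  calc σ * _ ≤ ∑ l ∈ Finset.Icc τ t, muStep cμ ζ l := hmain
    _ ≤ cμ * (1 / ((ζ - 1) * (τ : ℝ) ^ (ζ - 1))) := htail
    _ = cμ / ((ζ - 1) * (τ : ℝ) ^ (ζ - 1)) := by rw [mul_one_div]
end

section
/- Let ρ ∈ (0,1), σ ∈ (0,1], ν ∈ (0,1], and w ∈ (0,1] be reals, let c_β ≥ 1/((1−√ρ)σ), and let τ ≥ 1 be an integer with (1 + 1/(τ+1))^w ≤ 1/√ρ. Let (d_t)_{t≥τ} be reals with σ ≤ d_t ≤ 1 and β_t d_t ≤ 1 for all t ≥ τ, where β_t := c_β/(t+1)^ν. Then for every integer t ≥ τ: (a) Σ_{k=τ}^{t} β_k d_k (∏_{l=k+1}^{t}(1 − β_l d_l)) (k+1)^{−w} ≤ 1/(√ρ (t+2)^w); and (b) for every real ζ > 1, Σ_{k=τ}^{t} β_k d_k (∏_{l=k+1}^{t}(1 − β_l d_l)) τ^{1−ζ} ≤ τ^{1−ζ}/√ρ. -/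
open Finset Real

theorem tel_aux (τ : ℕ) (a : ℕ → ℝ) : ∀ t, τ ≤ t →
    ∑ k ∈ Icc τ t, a k * ∏ l ∈ Icc (k+1) t, (1 - a l)
      = 1 - ∏ l ∈ Icc τ t, (1 - a l) := by
  intro t ht
  induction t, ht using Nat.le_induction with
  | base =>
      rw [Finset.Icc_self, Finset.sum_singleton, Finset.Icc_eq_empty (by omega),
        Finset.prod_empty, Finset.prod_singleton]
      ring
  | succ n hn ih =>
      rw [Finset.sum_Icc_succ_top (by omega),
        Finset.Icc_eq_empty (a := n+1+1) (b := n+1) (by omega), Finset.prod_empty,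
        Finset.prod_Icc_succ_top (a := τ) (b := n) (by omega),
        Finset.sum_congr rfl (fun k hk => by
          rw [Finset.prod_Icc_succ_top (by exact Nat.succ_le_succ (Finset.mem_Icc.mp hk).2),
            ← mul_assoc]),
        ← Finset.sum_mul, ih]
      ring

set_option maxHeartbeats 2000000 in
/-- helper bounds for the weighted sums
`Σ_{k=τ}^{t} β_k d_k ∏_{l=k+1}^{t}(1 − β_l d_l) (k+1)^{−w}` and
`Σ_{k=τ}^{t} β_k d_k ∏_{l=k+1}^{t}(1 − β_l d_l) τ^{1−ζ}`,
where `β_t = c_β/(t+1)^ν`. -/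
theorem weighted_sum_bounds (ρ σ ν w cβ : ℝ)
    (hρ : 0 < ρ) (hρ1 : ρ < 1)
    (hσ : 0 < σ) (hσ1 : σ ≤ 1)
    (hν : 0 < ν) (hν1 : ν ≤ 1)
    (hw : 0 < w) (hw1 : w ≤ 1)
    (hcβ : 1 / ((1 - Real.sqrt ρ) * σ) ≤ cβ)
    (τ : ℕ) (hτ : 1 ≤ τ)
    (hτρ : (1 + 1 / ((τ : ℝ) + 1)) ^ w ≤ 1 / Real.sqrt ρ)
    (d : ℕ → ℝ)
    (hd : ∀ t : ℕ, τ ≤ t → σ ≤ d t ∧ d t ≤ 1)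
    (hβd : ∀ t : ℕ, τ ≤ t → (cβ / ((t : ℝ) + 1) ^ ν) * d t ≤ 1) :
    ∀ t : ℕ, τ ≤ t →
      (∑ k ∈ Finset.Icc τ t,
          (cβ / ((k : ℝ) + 1) ^ ν) * d k
            * (∏ l ∈ Finset.Icc (k + 1) t, (1 - (cβ / ((l : ℝ) + 1) ^ ν) * d l))
            * (1 / ((k : ℝ) + 1) ^ w)
        ≤ 1 / (Real.sqrt ρ * ((t : ℝ) + 2) ^ w))
      ∧ (∀ ζ : ℝ, 1 < ζ →
        ∑ k ∈ Finset.Icc τ t,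
            (cβ / ((k : ℝ) + 1) ^ ν) * d k
              * (∏ l ∈ Finset.Icc (k + 1) t, (1 - (cβ / ((l : ℝ) + 1) ^ ν) * d l))
              * (τ : ℝ) ^ (1 - ζ)
          ≤ (τ : ℝ) ^ (1 - ζ) / Real.sqrt ρ) := by
  set a : ℕ → ℝ := fun k => (cβ / ((k : ℝ) + 1) ^ ν) * d k with ha_def
  have hs0 : 0 < Real.sqrt ρ := Real.sqrt_pos.mpr hρ
  have hs1 : Real.sqrt ρ < 1 := by
    have := Real.sqrt_lt_sqrt hρ.le hρ1
    rwa [Real.sqrt_one] at this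
  have h1s : 0 < 1 - Real.sqrt ρ := by linarith
  have hcβ0 : 0 < cβ := lt_of_lt_of_le (by positivity) hcβ
  have ha0 : ∀ k, τ ≤ k → 0 ≤ a k := fun k hk => by
    have hdk := (hd k hk).1
    simp only [ha_def]
    exact mul_nonneg (by positivity) (le_trans hσ.le hdk)
  have ha1 : ∀ k, τ ≤ k → a k ≤ 1 := hβd
  have halow : ∀ k, τ ≤ k → 1 / ((1 - Real.sqrt ρ) * ((k:ℝ)+1)) ≤ a k := by
    intro k hk
    have hk1 : (1:ℝ) ≤ (k:ℝ)+1 := by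
      have := Nat.cast_nonneg (α := ℝ) k; linarith
    have hpow : ((k:ℝ)+1)^ν ≤ (k:ℝ)+1 := by
      have := Real.rpow_le_rpow_of_exponent_le hk1 hν1
      rwa [Real.rpow_one] at this
    have hpow0 : (0:ℝ) < ((k:ℝ)+1)^ν := by positivity
    have step1 : 1 / ((1 - Real.sqrt ρ) * ((k:ℝ)+1)) ≤ 1 / ((1 - Real.sqrt ρ) * ((k:ℝ)+1)^ν) := by
      apply one_div_le_one_div_of_le (by positivity)
      exact mul_le_mul_of_nonneg_left hpow h1s.le
    have step2 : 1 / ((1 - Real.sqrt ρ) * ((k:ℝ)+1)^ν)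
        = (1 / ((1 - Real.sqrt ρ) * σ)) * σ * (1 / ((k:ℝ)+1)^ν) := by
      field_simp
    have step3 : (1 / ((1 - Real.sqrt ρ) * σ)) * σ * (1 / ((k:ℝ)+1)^ν)
        ≤ cβ * d k * (1 / ((k:ℝ)+1)^ν) := by
      have hdk := (hd k hk).1
      have h1 : (1 / ((1 - Real.sqrt ρ) * σ)) * σ ≤ cβ * σ :=
        mul_le_mul_of_nonneg_right hcβ hσ.le
      have h2 : cβ * σ ≤ cβ * d k := mul_le_mul_of_nonneg_left hdk hcβ0.le
      have h3 : (0:ℝ) ≤ 1 / ((k:ℝ)+1)^ν := by positivity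
      nlinarith
    have heq : cβ * d k * (1 / ((k:ℝ)+1)^ν) = a k := by
      simp only [ha_def]; ring
    linarith [step2.le, step2.ge]
  have hprod0 : ∀ t, 0 ≤ ∏ l ∈ Icc τ t, (1 - a l) := fun t =>
    Finset.prod_nonneg (fun l hl => by
      have := ha1 l (Finset.mem_Icc.mp hl).1; linarith)
  have hsum1 : ∀ t, τ ≤ t → ∑ k ∈ Icc τ t, a k * ∏ l ∈ Icc (k+1) t, (1 - a l) ≤ 1 := by
    intro t ht
    rw [tel_aux τ a t ht]
    linarith [hprod0 t]
  have parta : ∀ t, τ ≤ t →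
      ∑ k ∈ Icc τ t, a k * (∏ l ∈ Icc (k+1) t, (1 - a l)) * (1 / ((k:ℝ)+1)^w)
        ≤ 1 / (Real.sqrt ρ * ((t:ℝ)+2)^w) := by
    intro t ht
    induction t, ht using Nat.le_induction with
    | base =>
        rw [Finset.Icc_self, Finset.sum_singleton, Finset.Icc_eq_empty (by omega),
          Finset.prod_empty, mul_one]
        have hkey : Real.sqrt ρ * ((τ:ℝ)+2)^w ≤ ((τ:ℝ)+1)^w := by
          have hsplit : ((τ:ℝ)+2)^w = (1 + 1/((τ:ℝ)+1))^w * ((τ:ℝ)+1)^w := by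
            rw [← Real.mul_rpow (by positivity) (by positivity)]
            congr 1
            field_simp
            ring
          rw [hsplit]
          have hp : (0:ℝ) ≤ ((τ:ℝ)+1)^w := by positivity
          have h1 := mul_le_mul_of_nonneg_right hτρ hp
          have h2 : Real.sqrt ρ * ((1/Real.sqrt ρ) * ((τ:ℝ)+1)^w) = ((τ:ℝ)+1)^w := by
            field_simp
          nlinarith
        have h3 : a τ * (1 / ((τ:ℝ)+1)^w) ≤ 1 / ((τ:ℝ)+1)^w := by
          have h5 : (0:ℝ) ≤ 1 / ((τ:ℝ)+1)^w := by positivity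
          nlinarith [ha1 τ le_rfl, ha0 τ le_rfl]
        have h4 : 1 / ((τ:ℝ)+1)^w ≤ 1 / (Real.sqrt ρ * ((τ:ℝ)+2)^w) :=
          one_div_le_one_div_of_le (by positivity) hkey
        linarith
    | succ n hn ih =>
        have hsum : ∑ k ∈ Icc τ n, a k * (∏ l ∈ Icc (k+1) (n+1), (1 - a l)) * (1/((k:ℝ)+1)^w)
            = (∑ k ∈ Icc τ n, a k * (∏ l ∈ Icc (k+1) n, (1 - a l)) * (1/((k:ℝ)+1)^w))
              * (1 - a (n+1)) := by
          rw [Finset.sum_mul]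
          refine Finset.sum_congr rfl (fun k hk => ?_)
          rw [Finset.prod_Icc_succ_top (Nat.succ_le_succ (Finset.mem_Icc.mp hk).2)]
          ring
        rw [Finset.sum_Icc_succ_top (by omega),
          Finset.Icc_eq_empty (a := n+1+1) (b := n+1) (by omega), Finset.prod_empty, hsum]
        push_cast
        have e1 : (n:ℝ)+1+1 = (n:ℝ)+2 := by ring
        have e2 : (n:ℝ)+1+2 = (n:ℝ)+3 := by ring
        rw [e1, e2]
        set A := a (n+1) with hA_def
        have hA0 : 0 ≤ A := ha0 (n+1) (by omega)
        have hA1 : A ≤ 1 := ha1 (n+1) (by omega)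
        have hAlow : 1 / ((1 - Real.sqrt ρ) * ((n:ℝ)+2)) ≤ A := by
          have h := halow (n+1) (by omega)
          rw [← hA_def] at h
          push_cast at h
          have e : (n:ℝ)+1+1 = (n:ℝ)+2 := by ring
          rwa [e] at h
        have hB : (0:ℝ) < ((n:ℝ)+2)^w := by positivity
        have hB3 : (0:ℝ) < ((n:ℝ)+3)^w := by positivity
        calc (∑ k ∈ Icc τ n, a k * (∏ l ∈ Icc (k+1) n, (1 - a l)) * (1/((k:ℝ)+1)^w)) * (1 - A)
              + A * 1 * (1 / ((n:ℝ)+2)^w)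
            ≤ (1 / (Real.sqrt ρ * ((n:ℝ)+2)^w)) * (1 - A) + A * (1 / ((n:ℝ)+2)^w) := by
              have := mul_le_mul_of_nonneg_right ih (by linarith : (0:ℝ) ≤ 1 - A)
              linarith
          _ = (1 - (1 - Real.sqrt ρ) * A) / (Real.sqrt ρ * ((n:ℝ)+2)^w) := by
              field_simp
              ring
          _ ≤ (((n:ℝ)+1)/((n:ℝ)+2)) / (Real.sqrt ρ * ((n:ℝ)+2)^w) := by
              gcongr
              have hmul := mul_le_mul_of_nonneg_left hAlow h1s.le
              have heq : (1 - Real.sqrt ρ) * (1 / ((1 - Real.sqrt ρ) * ((n:ℝ)+2)))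
                  = 1 / ((n:ℝ)+2) := by field_simp
              have hfrac : ((n:ℝ)+1)/((n:ℝ)+2) = 1 - 1/((n:ℝ)+2) := by
                field_simp
                ring
              rw [hfrac]
              linarith [hmul, heq.le, heq.ge]
          _ ≤ 1 / (Real.sqrt ρ * ((n:ℝ)+3)^w) := by
              rw [div_le_div_iff₀ (by positivity) (by positivity)]
              have hr : ((n:ℝ)+3)^w ≤ (((n:ℝ)+3)/((n:ℝ)+2)) * ((n:ℝ)+2)^w := by
                have h1 : ((n:ℝ)+3)^w = (((n:ℝ)+3)/((n:ℝ)+2))^w * ((n:ℝ)+2)^w := by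
                  rw [← Real.mul_rpow (by positivity) (by positivity)]
                  congr 1
                  field_simp
                have hb : (1:ℝ) ≤ ((n:ℝ)+3)/((n:ℝ)+2) := by
                  rw [le_div_iff₀ (by positivity)]; linarith
                have h2 : (((n:ℝ)+3)/((n:ℝ)+2))^w ≤ ((n:ℝ)+3)/((n:ℝ)+2) := by
                  have := Real.rpow_le_rpow_of_exponent_le hb hw1
                  rwa [Real.rpow_one] at this
                calc ((n:ℝ)+3)^w = (((n:ℝ)+3)/((n:ℝ)+2))^w * ((n:ℝ)+2)^w := h1
                  _ ≤ (((n:ℝ)+3)/((n:ℝ)+2)) * ((n:ℝ)+2)^w :=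
                      mul_le_mul_of_nonneg_right h2 (by positivity)
              have hfac : ((n:ℝ)+1)/((n:ℝ)+2) * (((n:ℝ)+3)/((n:ℝ)+2)) ≤ 1 := by
                rw [div_mul_div_comm, div_le_one (by positivity)]
                nlinarith
              calc ((n:ℝ)+1)/((n:ℝ)+2) * (Real.sqrt ρ * ((n:ℝ)+3)^w)
                  ≤ ((n:ℝ)+1)/((n:ℝ)+2) * (Real.sqrt ρ * ((((n:ℝ)+3)/((n:ℝ)+2)) * ((n:ℝ)+2)^w)) := by
                    gcongr
                _ = (((n:ℝ)+1)/((n:ℝ)+2) * (((n:ℝ)+3)/((n:ℝ)+2))) * (Real.sqrt ρ * ((n:ℝ)+2)^w) := by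
                    ring
                _ ≤ 1 * (Real.sqrt ρ * ((n:ℝ)+2)^w) :=
                    mul_le_mul_of_nonneg_right hfac (by positivity)
  intro t ht
  refine ⟨parta t ht, fun ζ hζ => ?_⟩
  have hc : (0:ℝ) ≤ (τ:ℝ)^(1-ζ) := Real.rpow_nonneg (by positivity) _
  have h1ρ : (1:ℝ) ≤ 1 / Real.sqrt ρ := one_le_one_div hs0 hs1.le
  calc ∑ k ∈ Icc τ t, a k * (∏ l ∈ Icc (k+1) t, (1 - a l)) * (τ:ℝ)^(1-ζ)
      = (∑ k ∈ Icc τ t, a k * ∏ l ∈ Icc (k+1) t, (1 - a l)) * (τ:ℝ)^(1-ζ) := by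
        rw [Finset.sum_mul]
    _ ≤ 1 * (τ:ℝ)^(1-ζ) := mul_le_mul_of_nonneg_right (hsum1 t ht) hc
    _ ≤ (τ:ℝ)^(1-ζ) / Real.sqrt ρ := by
        rw [one_mul, div_eq_mul_inv, ← one_div]
        calc (τ:ℝ)^(1-ζ) = (τ:ℝ)^(1-ζ) * 1 := (mul_one _).symm
          _ ≤ (τ:ℝ)^(1-ζ) * (1 / Real.sqrt ρ) := mul_le_mul_of_nonneg_left h1ρ hc
end

section
/- Let K ≥ 2 be an integer, let (e_k)_{1≤k≤K} be reals with 0 ≤ e_k ≤ 2, let (c_k)_{1≤k≤K} be positive and nonincreasing, and let (δ_k)_{1≤k≤K−1} be reals such that e_k ≤ (e_k − e_{k+1})/c_{k+1} + δ_k for all 1 ≤ k ≤ K−1. Then (1/K) Σ_{k=1}^{K−1} e_k ≤ 2/(K c_K) + (1/K) Σ_{k=1}^{K−1} δ_k. -/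
open Finset Real

lemma abel_aux (K : ℕ) (e c : ℕ → ℝ)
    (he : ∀ k : ℕ, 1 ≤ k → k ≤ K → 0 ≤ e k ∧ e k ≤ 2)
    (hcpos : ∀ k : ℕ, 1 ≤ k → k ≤ K → 0 < c k)
    (hcmono : ∀ k : ℕ, 1 ≤ k → k + 1 ≤ K → c (k + 1) ≤ c k) :
    ∀ n : ℕ, n + 1 ≤ K →
      ∑ k ∈ Finset.Icc 1 n, (e k - e (k + 1)) / c (k + 1) ≤ (2 - e (n + 1)) / c (n + 1) := by
  intro n
  induction n with
  | zero =>
      intro h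
      rw [show Finset.Icc 1 0 = ∅ by simp]
      simp only [Finset.sum_empty]
      have h1 := he 1 le_rfl h
      have h2 := hcpos 1 le_rfl h
      exact div_nonneg (by linarith [h1.2]) h2.le
  | succ n ih =>
      intro h
      have hn1 : n + 1 ≤ K := le_trans (by omega) h
      have ihn := ih hn1
      rw [Finset.sum_Icc_succ_top (by omega : 1 ≤ n + 1)]
      have hc2 : 0 < c (n + 2) := hcpos (n + 2) (by omega) h
      have hc1 : 0 < c (n + 1) := hcpos (n + 1) (by omega) hn1
      have hmono : c (n + 2) ≤ c (n + 1) := hcmono (n + 1) (by omega) h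
      have he1 := he (n + 1) (by omega) hn1
      have key : (2 - e (n + 1)) / c (n + 1) ≤ (2 - e (n + 1)) / c (n + 2) := by
        apply div_le_div_of_nonneg_left (by linarith [he1.2]) hc2 hmono
      calc ∑ k ∈ Finset.Icc 1 n, (e k - e (k + 1)) / c (k + 1)
            + (e (n + 1) - e (n + 1 + 1)) / c (n + 1 + 1)
          ≤ (2 - e (n + 1)) / c (n + 2) + (e (n + 1) - e (n + 2)) / c (n + 2) := by
            apply add_le_add (le_trans ihn key) le_rfl
        _ = (2 - e (n + 2)) / c (n + 2) := by ring

/-- Abel-summation averaging bound. If `0 ≤ e_k ≤ 2`, the `c_k` are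
positive and nonincreasing, and `e_k ≤ (e_k − e_{k+1})/c_{k+1} + δ_k` for
`1 ≤ k ≤ K−1`, then `(1/K) Σ_{k=1}^{K−1} e_k ≤ 2/(K c_K) + (1/K) Σ_{k=1}^{K−1} δ_k`. -/
theorem abel_averaging_bound (K : ℕ) (hK : 2 ≤ K)
    (e c δ : ℕ → ℝ)
    (he : ∀ k : ℕ, 1 ≤ k → k ≤ K → 0 ≤ e k ∧ e k ≤ 2)
    (hcpos : ∀ k : ℕ, 1 ≤ k → k ≤ K → 0 < c k)
    (hcmono : ∀ k : ℕ, 1 ≤ k → k + 1 ≤ K → c (k + 1) ≤ c k)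
    (hrec : ∀ k : ℕ, 1 ≤ k → k ≤ K - 1 → e k ≤ (e k - e (k + 1)) / c (k + 1) + δ k) :
    (1 / (K : ℝ)) * ∑ k ∈ Finset.Icc 1 (K - 1), e k
      ≤ 2 / ((K : ℝ) * c K) + (1 / (K : ℝ)) * ∑ k ∈ Finset.Icc 1 (K - 1), δ k := by
  have hK1 : (K - 1) + 1 = K := by omega
  have hcK : 0 < c K := hcpos K (by omega) le_rfl
  have habel : ∑ k ∈ Finset.Icc 1 (K - 1), (e k - e (k + 1)) / c (k + 1) ≤ 2 / c K := by
    have := abel_aux K e c he hcpos hcmono (K - 1) (by omega)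
    rw [hK1] at this
    have heK := he K (by omega) le_rfl
    refine this.trans ?_
    gcongr
    linarith [heK.1]
  have hsum : ∑ k ∈ Finset.Icc 1 (K - 1), e k
      ≤ 2 / c K + ∑ k ∈ Finset.Icc 1 (K - 1), δ k := by
    calc ∑ k ∈ Finset.Icc 1 (K - 1), e k
        ≤ ∑ k ∈ Finset.Icc 1 (K - 1), ((e k - e (k + 1)) / c (k + 1) + δ k) := by
          apply Finset.sum_le_sum
          intro k hk
          rw [Finset.mem_Icc] at hk
          exact hrec k hk.1 hk.2
      _ = ∑ k ∈ Finset.Icc 1 (K - 1), (e k - e (k + 1)) / c (k + 1)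
            + ∑ k ∈ Finset.Icc 1 (K - 1), δ k := Finset.sum_add_distrib
      _ ≤ 2 / c K + ∑ k ∈ Finset.Icc 1 (K - 1), δ k := by linarith
  have hKpos : (0 : ℝ) < K := by positivity
  have h2 : 2 / ((K : ℝ) * c K) = (1 / (K : ℝ)) * (2 / c K) := by
    field_simp
  rw [h2, ← mul_add]
  apply mul_le_mul_of_nonneg_left hsum (by positivity)
end
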